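/- arXiv:1303.2564 — 6 statements merged into one kernel-verified Lean document; each statement's English description precedes it below -/
import Mathlib

section
/- Let b_0, b_1, b_2 be real numbers with b_0 ≠ 0 and b_2 ≠ 0. If f is a rational function satisfying x/(b_0 + b_1 x + b_2 x^2) = f(x)/(b_0 + b_1 f(x) + b_2 f(x)^2) (as an identity of rational functions), then f(x) = x or f(x) = b_0/(b_2 x). Conversely, both f_1(x) = x and f_2(x) = b_0/(b_2 x) satisfy this identity. -/
open Polynomial Finset
open scoped Classical

/-- A set of vertices is independent if its elements are pairwise non-adjacent. -/
def IsIndepSet {V : Type*} (G : SimpleGraph V) (s : Finset V) : Prop :=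
  ∀ u ∈ s, ∀ v ∈ s, u ≠ v → ¬ G.Adj u v

/-- The independence number: maximum cardinality of an independent set. -/
noncomputable def indepNum {V : Type*} [Fintype V] (G : SimpleGraph V) : ℕ :=
  (Finset.univ.filter (fun s : Finset V => IsIndepSet G s)).sup Finset.card

/-- The number of independent sets of cardinality `k`. -/
noncomputable def indepCount {V : Type*} [Fintype V] (G : SimpleGraph V) (k : ℕ) : ℕ :=
  (Finset.univ.filter (fun s : Finset V => IsIndepSet G s ∧ s.card = k)).card

/-- The independence polynomial `I(G;x) = ∑ s_k x^k`. -/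
noncomputable def indepPoly {V : Type*} [Fintype V] (G : SimpleGraph V) : Polynomial ℝ :=
  ∑ k ∈ Finset.range (indepNum G + 1), Polynomial.C (indepCount G k : ℝ) * Polynomial.X ^ k

/-- The corona `G ∘ H`: take `G` together with `|V(G)|` disjoint copies of `H`,
joining each vertex `v` of `G` to all vertices of the `v`-th copy of `H`. -/
def corona {V W : Type*} (G : SimpleGraph V) (H : SimpleGraph W) :
    SimpleGraph (V ⊕ V × W) where
  Adj x y :=
    match x, y with
    | Sum.inl u, Sum.inl v => G.Adj u v
    | Sum.inl u, Sum.inr (v, _) => u = v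
    | Sum.inr (v, _), Sum.inl u => u = v
    | Sum.inr (v, w), Sum.inr (v', w') => v = v' ∧ H.Adj w w'
  symm := by
    constructor
    rintro (u | ⟨v, w⟩) (u' | ⟨v', w'⟩) h
    · exact G.adj_symm h
    · exact h
    · exact h
    · exact ⟨h.1.symm, H.adj_symm h.2⟩
  loopless := by
    constructor
    rintro (u | ⟨v, w⟩) h
    · exact G.irrefl h
    · exact H.irrefl h.2

/-- The disjoint union of two graphs. -/
def disjUnion {V W : Type*} (G : SimpleGraph V) (H : SimpleGraph W) :
    SimpleGraph (V ⊕ W) where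
  Adj x y :=
    match x, y with
    | Sum.inl a, Sum.inl b => G.Adj a b
    | Sum.inr a, Sum.inr b => H.Adj a b
    | _, _ => False
  symm := by
    constructor
    rintro (a | a) (b | b) h
    · exact G.adj_symm h
    · exact h.elim
    · exact h.elim
    · exact H.adj_symm h
  loopless := by
    constructor
    rintro (a | a) h
    · exact G.irrefl h
    · exact H.irrefl h

/-- The Zykov sum (join) of two graphs. -/
def zykovSum {V W : Type*} (G : SimpleGraph V) (H : SimpleGraph W) :
    SimpleGraph (V ⊕ W) where
  Adj x y :=
    match x, y with
    | Sum.inl a, Sum.inl b => G.Adj a b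
    | Sum.inr a, Sum.inr b => H.Adj a b
    | _, _ => True
  symm := by
    constructor
    rintro (a | a) (b | b) h
    · exact G.adj_symm h
    · trivial
    · trivial
    · exact H.adj_symm h
  loopless := by
    constructor
    rintro (a | a) h
    · exact G.irrefl h
    · exact H.irrefl h

/-- `K_p - e`: the complete graph on `Fin p` minus the edge joining vertices `0` and `1`. -/
def completeMinusEdge (p : ℕ) : SimpleGraph (Fin p) where
  Adj a b := a ≠ b ∧ ¬(a.val ≤ 1 ∧ b.val ≤ 1)
  symm := ⟨fun a b ⟨h1, h2⟩ => ⟨h1.symm, fun ⟨hb, ha⟩ => h2 ⟨ha, hb⟩⟩⟩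
  loopless := ⟨fun a ⟨h, _⟩ => h rfl⟩

/-- The clique number of a graph. -/
noncomputable def cliqueNum {V : Type*} [Fintype V] (G : SimpleGraph V) : ℕ :=
  (Finset.univ.filter (fun s : Finset V => G.IsClique ↑s)).sup Finset.card

/-- A graph is perfect if every induced subgraph has chromatic number
equal to its clique number. -/
def IsPerfect {V : Type*} [Fintype V] (G : SimpleGraph V) : Prop :=
  ∀ s : Set V, (G.induce s).chromaticNumber = (cliqueNum (G.induce s) : ℕ∞)

/-- The coefficient sequence `(a_0, …, a_n)` of a polynomial (indexed up to its
degree `n`) is symmetric, i.e. `a_i = a_{n-i}`. -/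
def CoeffSymmetric (P : Polynomial ℝ) : Prop :=
  ∀ i ≤ P.natDegree, P.coeff i = P.coeff (P.natDegree - i)

/-- The coefficient sequence of a polynomial is unimodal with mode `k`. -/
def IsMode (P : Polynomial ℝ) (k : ℕ) : Prop :=
  k ≤ P.natDegree ∧ (∀ i, i < k → P.coeff i ≤ P.coeff (i + 1)) ∧
    (∀ i, k ≤ i → i < P.natDegree → P.coeff (i + 1) ≤ P.coeff i)

/-- The coefficient sequence of a polynomial is unimodal. -/
def CoeffUnimodal (P : Polynomial ℝ) : Prop :=
  ∃ k, IsMode P k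

/-- `k` is the unique index achieving the maximal coefficient of `P`. -/
def IsUniqueMode (P : Polynomial ℝ) (k : ℕ) : Prop :=
  k ≤ P.natDegree ∧ ∀ j ≤ P.natDegree, j ≠ k → P.coeff j < P.coeff k

/-- The polynomial has a unique mode. -/
def HasUniqueMode (P : Polynomial ℝ) : Prop :=
  ∃ k, IsUniqueMode P k

/-- the rational function `x / (b₀ + b₁ x + b₂ x²)` admits exactly two
invariants, namely `f₁(x) = x` and `f₂(x) = b₀/(b₂ x)`. -/
theorem invariants_of_quadratic_rational_function (b0 b1 b2 : ℝ)
    (hb0 : b0 ≠ 0) (hb2 : b2 ≠ 0) (f : RatFunc ℝ) :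
    (RatFunc.X / (RatFunc.C b0 + RatFunc.C b1 * RatFunc.X + RatFunc.C b2 * RatFunc.X ^ 2) =
        f / (RatFunc.C b0 + RatFunc.C b1 * f + RatFunc.C b2 * f ^ 2)) ↔
      (f = RatFunc.X ∨ f = RatFunc.C b0 / (RatFunc.C b2 * RatFunc.X)) := by
  have hC0 : RatFunc.C b0 ≠ 0 := by simpa using hb0
  have hC2 : RatFunc.C b2 ≠ 0 := by simpa using hb2
  have hX : (RatFunc.X : RatFunc ℝ) ≠ 0 := RatFunc.X_ne_zero
  have hq : (Polynomial.C b0 + Polynomial.C b1 * Polynomial.X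
      + Polynomial.C b2 * Polynomial.X ^ 2) ≠ 0 := by
    intro h
    exact hb0 (by simpa using congrArg (fun p => Polynomial.coeff p 0) h)
  have hD : (RatFunc.C b0 + RatFunc.C b1 * RatFunc.X + RatFunc.C b2 * RatFunc.X ^ 2) ≠ 0 := by
    have := RatFunc.algebraMap_ne_zero (K := ℝ) hq
    simpa [map_add, map_mul, map_pow, RatFunc.algebraMap_C, RatFunc.algebraMap_X] using this
  constructor
  · intro h
    have hLHS : RatFunc.X / (RatFunc.C b0 + RatFunc.C b1 * RatFunc.X
        + RatFunc.C b2 * RatFunc.X ^ 2) ≠ 0 := div_ne_zero hX hD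
    have hRHS : f / (RatFunc.C b0 + RatFunc.C b1 * f + RatFunc.C b2 * f ^ 2) ≠ 0 :=
      h ▸ hLHS
    have hf : f ≠ 0 := fun hf0 => hRHS (by simp [hf0])
    have hDf : (RatFunc.C b0 + RatFunc.C b1 * f + RatFunc.C b2 * f ^ 2) ≠ 0 :=
      fun h0 => hRHS (by simp [h0])
    have hcross : RatFunc.X * (RatFunc.C b0 + RatFunc.C b1 * f + RatFunc.C b2 * f ^ 2)
        = f * (RatFunc.C b0 + RatFunc.C b1 * RatFunc.X + RatFunc.C b2 * RatFunc.X ^ 2) :=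
      (div_eq_div_iff hD hDf).mp h
    have hfac : (f - RatFunc.X) * (RatFunc.C b2 * RatFunc.X * f - RatFunc.C b0) = 0 := by
      linear_combination hcross
    rcases mul_eq_zero.mp hfac with h1 | h2
    · exact Or.inl (sub_eq_zero.mp h1)
    · right
      have h2' : RatFunc.C b2 * RatFunc.X * f = RatFunc.C b0 := sub_eq_zero.mp h2
      rw [eq_div_iff (mul_ne_zero hC2 hX)]
      linear_combination h2'
  · rintro (rfl | rfl)
    · rfl
    · have hDf : RatFunc.C b0 + RatFunc.C b1 * (RatFunc.C b0 / (RatFunc.C b2 * RatFunc.X)) +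
          RatFunc.C b2 * (RatFunc.C b0 / (RatFunc.C b2 * RatFunc.X)) ^ 2 =
          RatFunc.C b0 * (RatFunc.C b0 + RatFunc.C b1 * RatFunc.X + RatFunc.C b2 * RatFunc.X ^ 2)
            / (RatFunc.C b2 * RatFunc.X ^ 2) := by
        field_simp
        ring
      rw [hDf, div_eq_div_iff hD (div_ne_zero (mul_ne_zero hC0 hD)
        (mul_ne_zero hC2 (pow_ne_zero 2 hX)))]
      field_simp
end

section
/- Let G be a finite simple graph of order n ≥ 1, and let H be a finite simple graph with p vertices and q edges such that α(H) = 2. Set m = p(p−1)/2 − q and α = α(G∘H) and write I(G∘H;x) = Σ_{i=0}^{α} s_i x^i. Then s_{α−i} = m^{α/2 − i} · s_i for every i with 0 ≤ i ≤ α; that is, I(G∘H;x) is f-symmetric with f(i) = (p(p−1)/2 − q)^{α/2 − i}. -/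
open Polynomial Finset
open scoped Classical

set_option linter.unusedSectionVars false
set_option maxHeartbeats 1000000
section Aux
variable {V W : Type*} [Fintype V] [Fintype W] (G : SimpleGraph V) (H : SimpleGraph W)

lemma isIndepSet_empty : IsIndepSet G (∅ : Finset V) := by
  intro u hu; simp at hu

lemma IsIndepSet.subset {s t : Finset V} (h : IsIndepSet G s) (hts : t ⊆ s) :
    IsIndepSet G t := fun u hu v hv => h u (hts hu) v (hts hv)

lemma card_le_indepNum {s : Finset V} (hs : IsIndepSet G s) : s.card ≤ indepNum G :=
  Finset.le_sup (by simpa using hs)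

lemma exists_indep_card_indepNum :
    ∃ s : Finset V, IsIndepSet G s ∧ s.card = indepNum G := by
  obtain ⟨s, hs, h⟩ := Finset.exists_mem_eq_sup
    (univ.filter fun s : Finset V => IsIndepSet G s)
    ⟨∅, by simpa using isIndepSet_empty G⟩ Finset.card
  exact ⟨s, by simpa using hs, h.symm⟩

/-- fiber of a finset of pairs over a first coordinate -/
noncomputable def fib (t : Finset (V × W)) (v : V) : Finset W := univ.filter fun w => (v, w) ∈ t

lemma mem_fib {t : Finset (V × W)} {v : V} {w : W} : w ∈ fib t v ↔ (v, w) ∈ t := by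
  simp [fib]

lemma card_fib (t : Finset (V × W)) (v : V) :
    (fib t v).card = (t.filter fun x => x.1 = v).card := by
  apply Finset.card_nbij (fun w => (v, w))
  · intro w hw
    rw [Finset.mem_coe, mem_filter]
    exact ⟨mem_fib.mp hw, rfl⟩
  · intro w _ w' _ h; simpa using h
  · intro x hx
    rw [Finset.coe_filter] at hx
    obtain ⟨hxt, hx1⟩ := hx
    refine ⟨x.2, ?_, ?_⟩
    · rw [Finset.mem_coe, mem_fib, ← hx1]
      exact hxt
    · rw [← hx1]

lemma card_eq_sum_fib (t : Finset (V × W)) :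
    t.card = ∑ v : V, (fib t v).card := by
  simp_rw [card_fib]
  exact Finset.card_eq_sum_card_fiberwise (fun x _ => Finset.mem_univ x.1)

/-- admissible right-configurations supported on `S` -/
def FOK (S : Finset V) (t : Finset (V × W)) : Prop :=
  (∀ x ∈ t, x.1 ∈ S) ∧ ∀ v, IsIndepSet H (fib t v)

noncomputable def Fc (S : Finset V) (j : ℕ) : ℕ :=
  (univ.filter fun t : Finset (V × W) => FOK H S t ∧ t.card = j).card

lemma FOK_empty (S : Finset V) : FOK H S (∅ : Finset (V × W)) :=
  ⟨by simp, fun v => by simpa [fib] using isIndepSet_empty H⟩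

lemma Fc_zero (S : Finset V) : Fc H S 0 = 1 := by
  rw [Fc, Finset.card_eq_one]
  refine ⟨∅, ?_⟩
  ext t
  simp only [mem_filter, mem_univ, true_and, Finset.card_eq_zero, Finset.mem_singleton]
  constructor
  · rintro ⟨_, rfl⟩; rfl
  · rintro rfl; exact ⟨FOK_empty H S, rfl⟩

lemma card_le_of_FOK (hH : indepNum H = 2) {S : Finset V} {t : Finset (V × W)}
    (ht : FOK H S t) : t.card ≤ 2 * S.card := by
  rw [card_eq_sum_fib]
  have h1 : ∀ v ∈ univ, v ∉ S → (fib t v).card = 0 := by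
    intro v _ hv
    simp only [Finset.card_eq_zero]
    ext w
    simp only [mem_fib, Finset.notMem_empty, iff_false]
    intro hw
    exact hv (ht.1 _ hw)
  rw [← Finset.sum_subset (Finset.subset_univ S) h1]
  calc ∑ v ∈ S, (fib t v).card ≤ ∑ v ∈ S, 2 := by
        refine Finset.sum_le_sum fun v _ => ?_
        rw [← hH]; exact card_le_indepNum H (ht.2 v)
    _ = 2 * S.card := by rw [Finset.sum_const]; ring
  
lemma Fc_vanish (hH : indepNum H = 2) {S : Finset V} {j : ℕ} (hj : 2 * S.card < j) :
    Fc H S j = 0 := by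
  rw [Fc, Finset.card_eq_zero]
  rw [Finset.filter_eq_empty_iff]
  rintro t - ⟨ht, rfl⟩
  exact absurd (card_le_of_FOK H hH ht) (by omega)

end Aux
section Aux2
variable {V W : Type*} [Fintype V] [Fintype W] (H : SimpleGraph W)

lemma indepCount_zero : indepCount H 0 = 1 := by
  rw [indepCount, Finset.card_eq_one]
  refine ⟨∅, ?_⟩
  ext s
  simp only [mem_filter, mem_univ, true_and, Finset.card_eq_zero, Finset.mem_singleton]
  constructor
  · rintro ⟨_, rfl⟩; rfl
  · rintro rfl; exact ⟨isIndepSet_empty H, rfl⟩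

lemma isIndepSet_singleton (w : W) : IsIndepSet H ({w} : Finset W) := by
  intro u hu v hv huv
  rw [Finset.mem_singleton] at hu hv
  exact absurd (hu.trans hv.symm) huv

lemma indepCount_one : indepCount H 1 = Fintype.card W := by
  rw [indepCount, ← Finset.card_univ]
  symm
  apply Finset.card_nbij (fun w : W => ({w} : Finset W))
  · intro w _
    rw [Finset.mem_coe, mem_filter]
    exact ⟨Finset.mem_univ _, isIndepSet_singleton H w, Finset.card_singleton w⟩
  · exact Finset.singleton_injective.injOn
  · intro s hs
    rw [Finset.coe_filter] at hs
    obtain ⟨-, -, h1⟩ := hs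
    obtain ⟨x, rfl⟩ := Finset.card_eq_one.mp h1
    exact ⟨x, by simp, rfl⟩

lemma indep_card_le_two (hH : indepNum H = 2) {s : Finset W} (hs : IsIndepSet H s) :
    s.card ≤ 2 := hH ▸ card_le_indepNum H hs

variable {V : Type*} [Fintype V]

lemma count_fiber (hH : indepNum H = 2) {a : V} {S : Finset V} (ha : a ∉ S) (j : ℕ)
    (h : Finset W) :
    ((univ.filter fun t : Finset (V × W) =>
        (FOK H (insert a S) t ∧ t.card = j) ∧ fib t a = h)).card
      = if IsIndepSet H h ∧ h.card ≤ j then Fc H S (j - h.card) else 0 := by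
  -- basic facts
  have himg : ∀ x : V × W, x ∈ h.image (fun w => ((a, w) : V × W)) ↔ x.1 = a ∧ x.2 ∈ h := by
    intro x
    simp only [Finset.mem_image]
    constructor
    · rintro ⟨w, hw, rfl⟩; exact ⟨rfl, hw⟩
    · rintro ⟨h1, h2⟩; exact ⟨x.2, h2, by rw [← h1]⟩
  split_ifs with hcond
  · obtain ⟨hind, hcard⟩ := hcond
    rw [Fc]
    apply Finset.card_nbij' (fun t => t.filter (fun x => ¬ x.1 = a))
      (fun t' => t' ∪ h.image (fun w => (a, w)))
    · -- forward map lands in target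
      rintro t ht
      rw [Finset.mem_coe, mem_filter] at ht
      obtain ⟨-, ⟨⟨hmem, hfib⟩, htc⟩, hfa⟩ := ht
      rw [Finset.mem_coe, mem_filter]
      refine ⟨Finset.mem_univ _, ⟨⟨?_, ?_⟩, ?_⟩⟩
      · intro x hx
        rw [mem_filter] at hx
        rcases Finset.mem_insert.mp (hmem x hx.1) with h1 | h1
        · exact absurd h1 hx.2
        · exact h1
      · intro v
        refine (hfib v).subset H ?_
        intro w hw
        rw [mem_fib] at hw ⊢
        exact (mem_filter.mp hw).1
      · have hsplit := Finset.card_filter_add_card_filter_not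
          (s := t) (p := fun x : V × W => x.1 = a)
        have hfibcard : (t.filter fun x : V × W => x.1 = a).card = h.card := by
          rw [← card_fib, hfa]
        beta_reduce
        omega
    · -- backward map lands in source
      rintro t' ht'
      rw [Finset.mem_coe, mem_filter] at ht'
      obtain ⟨-, ⟨hmem, hfib⟩, htc⟩ := ht'
      have hdisj : Disjoint t' (h.image (fun w => ((a, w) : V × W))) := by
        rw [Finset.disjoint_left]
        intro x hx hx'
        exact ha (((himg x).mp hx').1 ▸ hmem x hx)
      have hfib_union : ∀ v, fib (t' ∪ h.image (fun w => (a, w))) v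
          = if v = a then h else fib t' v := by
        intro v
        split_ifs with hva
        · subst hva
          ext w
          rw [mem_fib, Finset.mem_union, himg]
          constructor
          · rintro (h1 | ⟨-, h1⟩)
            · exact absurd (hmem _ h1) ha
            · exact h1
          · intro h1; exact Or.inr ⟨rfl, h1⟩
        · ext w
          rw [mem_fib, Finset.mem_union, himg, mem_fib]
          constructor
          · rintro (h1 | ⟨h1, -⟩)
            · exact h1
            · exact absurd h1 hva
          · intro h1; exact Or.inl h1
      rw [Finset.mem_coe, mem_filter]
      refine ⟨Finset.mem_univ _, ⟨⟨?_, ?_⟩, ?_⟩, ?_⟩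
      · intro x hx
        rcases Finset.mem_union.mp hx with h1 | h1
        · exact Finset.mem_insert_of_mem (hmem x h1)
        · rw [((himg x).mp h1).1]; exact Finset.mem_insert_self _ _
      · intro v
        rw [hfib_union v]
        split_ifs
        · exact hind
        · exact hfib v
      · rw [Finset.card_union_of_disjoint hdisj,
          Finset.card_image_of_injective _ (fun w w' hww => by simpa using hww)]
        omega
      · rw [hfib_union a, if_pos rfl]
    · -- left inverse
      rintro t ht
      rw [Finset.mem_coe, mem_filter] at ht
      obtain ⟨-, ⟨⟨hmem, hfib⟩, htc⟩, hfa⟩ := ht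
      ext x
      rw [Finset.mem_union, mem_filter]
      constructor
      · rintro (⟨h1, -⟩ | h1)
        · exact h1
        · obtain ⟨hx1, hx2⟩ := (himg x).mp h1
          rw [← hfa, mem_fib] at hx2
          have : x = (a, x.2) := by rw [← hx1]
          rw [this]; exact hx2
      · intro hx
        by_cases hxa : x.1 = a
        · refine Or.inr ((himg x).mpr ⟨hxa, ?_⟩)
          rw [← hfa, mem_fib, ← hxa]
          exact hx
        · exact Or.inl ⟨hx, hxa⟩
    · -- right inverse
      rintro t' ht'
      rw [Finset.mem_coe, mem_filter] at ht'
      obtain ⟨-, ⟨hmem, hfib⟩, htc⟩ := ht'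
      ext x
      rw [mem_filter, Finset.mem_union]
      constructor
      · rintro ⟨h1 | h1, hxa⟩
        · exact h1
        · exact absurd ((himg x).mp h1).1 hxa
      · intro hx
        exact ⟨Or.inl hx, fun hc => ha (hc ▸ hmem x hx)⟩
  · -- condition fails: set empty
    rw [Finset.card_eq_zero, Finset.filter_eq_empty_iff]
    rintro t - ⟨⟨⟨hmem, hfib⟩, htc⟩, hfa⟩
    apply hcond
    constructor
    · rw [← hfa]; exact hfib a
    · have h1 : (t.filter fun x : V × W => x.1 = a).card = h.card := by
        rw [← card_fib, hfa]
      have h2 : (t.filter fun x : V × W => x.1 = a).card ≤ t.card :=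
        Finset.card_le_card (Finset.filter_subset _ _)
      omega

end Aux2
section Aux3
variable {V W : Type*} [Fintype V] [Fintype W] (H : SimpleGraph W)

lemma Fc_insert (hH : indepNum H = 2) {a : V} {S : Finset V} (ha : a ∉ S) (j : ℕ) :
    Fc H (insert a S) j = Fc H S j
      + Fintype.card W * (if 1 ≤ j then Fc H S (j - 1) else 0)
      + indepCount H 2 * (if 2 ≤ j then Fc H S (j - 2) else 0) := by
  have step1 : Fc H (insert a S) j
      = ∑ h : Finset W, if IsIndepSet H h ∧ h.card ≤ j then Fc H S (j - h.card) else 0 := by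
    rw [Fc, Finset.card_eq_sum_card_fiberwise
      (f := fun t : Finset (V × W) => fib t a) (t := Finset.univ)
      (fun t _ => Finset.mem_univ _)]
    refine Finset.sum_congr rfl fun h _ => ?_
    rw [← count_fiber H hH ha j h, Finset.filter_filter]
  rw [step1]
  -- restrict to independent sets
  simp only [ite_and]
  rw [← Finset.sum_filter]
  -- group by cardinality
  have maps : ∀ h ∈ univ.filter (fun h : Finset W => IsIndepSet H h),
      h.card ∈ Finset.range 3 := by
    intro h hh
    rw [mem_filter] at hh
    rw [Finset.mem_range]
    have := indep_card_le_two H hH hh.2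
    omega
  rw [← Finset.sum_fiberwise_of_maps_to' maps
    (fun k => if k ≤ j then Fc H S (j - k) else 0)]
  have inner : ∀ k, ∑ h ∈ (univ.filter (fun h : Finset W => IsIndepSet H h)).filter
        (fun h => h.card = k), (if k ≤ j then Fc H S (j - k) else 0)
      = indepCount H k * (if k ≤ j then Fc H S (j - k) else 0) := by
    intro k
    rw [Finset.sum_const, smul_eq_mul]
    congr 1
    rw [Finset.filter_filter, indepCount]
  rw [Finset.sum_range_succ, Finset.sum_range_succ, Finset.sum_range_one,
    inner 0, inner 1, inner 2, indepCount_zero, indepCount_one]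
  simp only [Nat.zero_le, if_true, Nat.sub_zero, one_mul]

lemma Fc_sym (hH : indepNum H = 2) (S : Finset V) :
    ∀ j ≤ S.card, Fc H S (2 * S.card - j) = indepCount H 2 ^ (S.card - j) * Fc H S j := by
  classical
  induction S using Finset.induction_on with
  | empty =>
      intro j hj
      simp only [Finset.card_empty, Nat.le_zero] at hj
      subst hj
      simp
  | @insert a S ha IH =>
      intro j hj
      rw [Finset.card_insert_of_notMem ha] at hj ⊢
      by_cases hje : j = S.card + 1
      · have h1 : 2 * (S.card + 1) - j = j := by omega
        have h2 : S.card + 1 - j = 0 := by omega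
        rw [h1, h2, pow_zero, one_mul]
      have hjS : j ≤ S.card := by omega
      rw [Fc_insert H hH ha, Fc_insert H hH ha]
      match j, hjS with
      | 0, hjS =>
        have e1 : 2 * (S.card + 1) - 0 = 2 * S.card + 2 := by omega
        rw [e1]
        have v1 : Fc H S (2 * S.card + 2) = 0 := Fc_vanish H hH (by omega)
        have v2 : Fc H S (2 * S.card + 2 - 1) = 0 := by
          rw [show 2 * S.card + 2 - 1 = 2 * S.card + 1 from by omega]
          exact Fc_vanish H hH (by omega)
        have i0 := IH 0 (Nat.zero_le _)
        rw [Nat.sub_zero] at i0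
        rw [v1, v2, show 2 * S.card + 2 - 2 = 2 * S.card from by omega, i0,
          if_neg (by omega : ¬ (1:ℕ) ≤ 0), if_neg (by omega : ¬ (2:ℕ) ≤ 0),
          if_pos (by omega : 1 ≤ 2 * S.card + 2), if_pos (by omega : 2 ≤ 2 * S.card + 2),
          Nat.sub_zero, show S.card + 1 - 0 = S.card + 1 from by omega, pow_succ]
        ring
      | 1, hjS =>
        obtain ⟨k, hk⟩ : ∃ k, S.card = k + 1 := ⟨S.card - 1, by omega⟩
        rw [hk] at IH ⊢
        have v1 : Fc H S (2 * k + 3) = 0 := Fc_vanish H hH (by omega)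
        have i0 := IH 0 (Nat.zero_le _)
        have i1 := IH 1 (by omega)
        rw [show 2 * (k + 1) - 0 = 2 * k + 2 from by omega,
          show k + 1 - 0 = k + 1 from by omega] at i0
        rw [show 2 * (k + 1) - 1 = 2 * k + 1 from by omega,
          show k + 1 - 1 = k from by omega] at i1
        rw [show 2 * (k + 1 + 1) - 1 = 2 * k + 3 from by omega, v1,
          show 2 * k + 3 - 1 = 2 * k + 2 from by omega,
          show 2 * k + 3 - 2 = 2 * k + 1 from by omega, i0, i1,
          if_pos (by omega : 1 ≤ 2 * k + 3), if_pos (by omega : 2 ≤ 2 * k + 3),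
          if_pos (le_refl 1), if_neg (by omega : ¬ (2:ℕ) ≤ 1),
          show k + 1 + 1 - 1 = k + 1 from by omega,
          show (1:ℕ) - 1 = 0 from rfl, pow_succ]
        ring
      | (j' + 2), hjS =>
        have e1 : 2 * (S.card + 1) - (j' + 2) = 2 * S.card - j' := by omega
        have e2 : 2 * S.card - j' - 1 = 2 * S.card - (j' + 1) := by omega
        have e3 : 2 * S.card - j' - 2 = 2 * S.card - (j' + 2) := by omega
        have i0 := IH j' (by omega)
        have i1 := IH (j' + 1) (by omega)
        have i2 := IH (j' + 2) (by omega)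
        rw [e1, e2, e3, i0, i1, i2,
          if_pos (by omega : 1 ≤ 2 * S.card - j'), if_pos (by omega : 2 ≤ 2 * S.card - j'),
          if_pos (by omega : 1 ≤ j' + 2), if_pos (by omega : 2 ≤ j' + 2),
          show j' + 2 - 1 = j' + 1 from by omega, show j' + 2 - 2 = j' from by omega,
          show S.card - j' = (S.card - (j' + 2)) + 2 from by omega,
          show S.card - (j' + 1) = (S.card - (j' + 2)) + 1 from by omega,
          show S.card + 1 - (j' + 2) = (S.card - (j' + 2)) + 1 from by omega,
          pow_succ, pow_succ]
        ring

end Aux3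
section Aux4
variable {V W : Type*} [Fintype V] [Fintype W] (G : SimpleGraph V) (H : SimpleGraph W)

lemma corona_adj_inl_inl {u v : V} :
    (corona G H).Adj (Sum.inl u) (Sum.inl v) ↔ G.Adj u v := Iff.rfl

lemma corona_adj_inl_inr {u v : V} {w : W} :
    (corona G H).Adj (Sum.inl u) (Sum.inr (v, w)) ↔ u = v := Iff.rfl

lemma corona_adj_inr_inr {v v' : V} {w w' : W} :
    (corona G H).Adj (Sum.inr (v, w)) (Sum.inr (v', w')) ↔ v = v' ∧ H.Adj w w' := Iff.rfl

noncomputable def leftP (s : Finset (V ⊕ V × W)) : Finset V :=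
  univ.filter fun v => Sum.inl v ∈ s

noncomputable def rightP (s : Finset (V ⊕ V × W)) : Finset (V × W) :=
  univ.filter fun x => Sum.inr x ∈ s

lemma mem_leftP {s : Finset (V ⊕ V × W)} {v : V} : v ∈ leftP s ↔ Sum.inl v ∈ s := by
  simp [leftP]

lemma mem_rightP {s : Finset (V ⊕ V × W)} {x : V × W} : x ∈ rightP s ↔ Sum.inr x ∈ s := by
  simp [rightP]

lemma recomb (s : Finset (V ⊕ V × W)) :
    s = (leftP s).map ⟨Sum.inl, Sum.inl_injective⟩
      ∪ (rightP s).map ⟨Sum.inr, Sum.inr_injective⟩ := by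
  ext x
  cases x with
  | inl v => simp [mem_leftP, mem_rightP]
  | inr y => simp [mem_leftP, mem_rightP]

lemma disj_maps (A : Finset V) (t : Finset (V × W)) :
    Disjoint (A.map ⟨Sum.inl, Sum.inl_injective⟩)
      (t.map ⟨Sum.inr, Sum.inr_injective⟩) := by
  rw [Finset.disjoint_left]
  intro x hx hx'
  simp only [Finset.mem_map, Function.Embedding.coeFn_mk] at hx hx'
  obtain ⟨v, -, rfl⟩ := hx
  obtain ⟨y, -, h⟩ := hx'
  exact nomatch h

lemma card_split (s : Finset (V ⊕ V × W)) :
    s.card = (leftP s).card + (rightP s).card := by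
  conv_lhs => rw [recomb s]
  rw [Finset.card_union_of_disjoint (disj_maps _ _), Finset.card_map, Finset.card_map]

lemma leftP_comb (A : Finset V) (t : Finset (V × W)) :
    leftP (A.map ⟨Sum.inl, Sum.inl_injective⟩ ∪ t.map ⟨Sum.inr, Sum.inr_injective⟩) = A := by
  ext v; simp [mem_leftP]

lemma rightP_comb (A : Finset V) (t : Finset (V × W)) :
    rightP (A.map ⟨Sum.inl, Sum.inl_injective⟩ ∪ t.map ⟨Sum.inr, Sum.inr_injective⟩) = t := by
  ext x; simp [mem_rightP]

lemma indep_decomp_left {s : Finset (V ⊕ V × W)} (hs : IsIndepSet (corona G H) s) :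
    IsIndepSet G (leftP s) := by
  intro u hu v hv huv hadj
  exact hs (Sum.inl u) (mem_leftP.mp hu) (Sum.inl v) (mem_leftP.mp hv)
    (fun hc => huv (Sum.inl_injective hc)) ((corona_adj_inl_inl G H).mpr hadj)

lemma indep_decomp_right {s : Finset (V ⊕ V × W)} (hs : IsIndepSet (corona G H) s) :
    FOK H (leftP s)ᶜ (rightP s) := by
  constructor
  · intro x hx
    rw [Finset.mem_compl, mem_leftP]
    intro hc
    exact hs (Sum.inl x.1) hc (Sum.inr x) (mem_rightP.mp hx) (fun h => nomatch h)
      ((corona_adj_inl_inr G H).mpr rfl)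
  · intro v w hw w' hw' hww hadj
    rw [mem_fib, mem_rightP] at hw hw'
    exact hs (Sum.inr (v, w)) hw (Sum.inr (v, w')) hw'
      (fun hc => hww (by injection (Sum.inr_injective hc)))
      ((corona_adj_inr_inr G H).mpr ⟨rfl, hadj⟩)

lemma indep_comb {A : Finset V} {t : Finset (V × W)} (hA : IsIndepSet G A)
    (ht : FOK H Aᶜ t) :
    IsIndepSet (corona G H)
      (A.map ⟨Sum.inl, Sum.inl_injective⟩ ∪ t.map ⟨Sum.inr, Sum.inr_injective⟩) := by
  intro x hx y hy hxy hadj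
  rw [Finset.mem_union] at hx hy
  have hmem : ∀ z : V ⊕ V × W, z ∈ A.map ⟨Sum.inl, Sum.inl_injective⟩
      ∪ t.map ⟨Sum.inr, Sum.inr_injective⟩ →
      (∀ v, z = Sum.inl v → v ∈ A) ∧ (∀ x' : V × W, z = Sum.inr x' → x' ∈ t) := by
    intro z hz
    rw [Finset.mem_union] at hz
    constructor
    · intro v hv
      rcases hz with h1 | h1 <;>
        simp only [Finset.mem_map, Function.Embedding.coeFn_mk] at h1
      · obtain ⟨v', hv', he⟩ := h1; rw [hv] at he; rwa [← Sum.inl_injective he]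
      · obtain ⟨x', -, he⟩ := h1; rw [hv] at he; exact absurd he (by simp)
    · intro x' hx'
      rcases hz with h1 | h1 <;>
        simp only [Finset.mem_map, Function.Embedding.coeFn_mk] at h1
      · obtain ⟨v', -, he⟩ := h1; rw [hx'] at he; exact absurd he (by simp)
      · obtain ⟨y', hy', he⟩ := h1; rw [hx'] at he; rwa [← Sum.inr_injective he]
  match x, y with
  | Sum.inl u, Sum.inl v =>
      exact hA u ((hmem _ (Finset.mem_union.mpr hx)).1 u rfl)
        v ((hmem _ (Finset.mem_union.mpr hy)).1 v rfl)
        (fun hc => hxy (by rw [hc])) ((corona_adj_inl_inl G H).mp hadj)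
  | Sum.inl u, Sum.inr (v, w) =>
      have h1 : u ∈ A := (hmem _ (Finset.mem_union.mpr hx)).1 u rfl
      have h2 : (v, w) ∈ t := (hmem _ (Finset.mem_union.mpr hy)).2 _ rfl
      have := ht.1 _ h2
      rw [Finset.mem_compl] at this
      exact this ((corona_adj_inl_inr G H).mp hadj ▸ h1)
  | Sum.inr (v, w), Sum.inl u =>
      have h1 : u ∈ A := (hmem _ (Finset.mem_union.mpr hy)).1 u rfl
      have h2 : (v, w) ∈ t := (hmem _ (Finset.mem_union.mpr hx)).2 _ rfl
      have := ht.1 _ h2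
      rw [Finset.mem_compl] at this
      have huv : u = v := hadj
      exact this (huv ▸ h1)
  | Sum.inr (v, w), Sum.inr (v', w') =>
      obtain ⟨hvv, hadj'⟩ := (corona_adj_inr_inr G H).mp hadj
      subst hvv
      have h1 : (v, w) ∈ t := (hmem _ (Finset.mem_union.mpr hx)).2 _ rfl
      have h2 : (v, w') ∈ t := (hmem _ (Finset.mem_union.mpr hy)).2 _ rfl
      have hww : w ≠ w' := fun hc => hxy (by rw [hc])
      exact ht.2 v w (mem_fib.mpr h1) w' (mem_fib.mpr h2) hww hadj'

lemma corona_count (k : ℕ) :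
    indepCount (corona G H) k
      = ∑ A ∈ univ.filter (fun A : Finset V => IsIndepSet G A),
          (if A.card ≤ k then Fc H Aᶜ (k - A.card) else 0) := by
  rw [indepCount, Finset.card_eq_sum_card_fiberwise
    (f := fun s => leftP s) (t := univ.filter (fun A : Finset V => IsIndepSet G A))
    (fun s hs => by
      simp only [Finset.mem_coe, mem_filter] at hs ⊢
      exact ⟨Finset.mem_univ _, indep_decomp_left G H hs.2.1⟩)]
  refine Finset.sum_congr rfl fun A hA => ?_
  rw [mem_filter] at hA
  rw [Finset.filter_filter]
  split_ifs with hAk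
  · rw [Fc]
    apply Finset.card_nbij' (fun s => rightP s)
      (fun t => A.map ⟨Sum.inl, Sum.inl_injective⟩ ∪ t.map ⟨Sum.inr, Sum.inr_injective⟩)
    · intro s hs
      rw [Finset.mem_coe, mem_filter] at hs
      obtain ⟨-, ⟨hind, hc⟩, hl⟩ := hs
      rw [Finset.mem_coe, mem_filter]
      refine ⟨Finset.mem_univ _, ?_, ?_⟩
      · rw [← hl]; exact indep_decomp_right G H hind
      · have := card_split s
        rw [hl] at this
        beta_reduce
        omega
    · intro t ht
      rw [Finset.mem_coe, mem_filter] at ht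
      obtain ⟨-, hFOK, hc⟩ := ht
      rw [Finset.mem_coe, mem_filter]
      refine ⟨Finset.mem_univ _, ⟨indep_comb G H hA.2 hFOK, ?_⟩, leftP_comb _ _⟩
      rw [Finset.card_union_of_disjoint (disj_maps _ _), Finset.card_map,
        Finset.card_map, hc]
      omega
    · intro s hs
      rw [Finset.mem_coe, mem_filter] at hs
      rw [← hs.2.2]
      exact (recomb s).symm
    · intro t _
      exact rightP_comb _ _
  · rw [Finset.card_eq_zero, Finset.filter_eq_empty_iff]
    rintro s - ⟨⟨-, hc⟩, hl⟩
    have := card_split s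
    rw [hl] at this
    omega

lemma indepNum_corona (hH : indepNum H = 2) :
    indepNum (corona G H) = 2 * Fintype.card V := by
  apply le_antisymm
  · apply Finset.sup_le
    intro s hs
    rw [mem_filter] at hs
    have h1 := card_split s
    have h2 := card_le_of_FOK H hH (indep_decomp_right G H hs.2)
    have h3 : (leftP s)ᶜ.card = Fintype.card V - (leftP s).card := by
      rw [Finset.card_compl]
    have h4 : (leftP s).card ≤ Fintype.card V := by
      rw [← Finset.card_univ]; exact Finset.card_le_card (Finset.subset_univ _)
    omega
  · obtain ⟨h2, hind, hcard⟩ := exists_indep_card_indepNum H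
    rw [hH] at hcard
    have key : IsIndepSet (corona G H)
        ((univ ×ˢ h2).map ⟨Sum.inr, Sum.inr_injective⟩) := by
      intro x hx y hy hxy hadj
      simp only [Finset.mem_map, Function.Embedding.coeFn_mk, Finset.mem_product] at hx hy
      obtain ⟨⟨v, w⟩, ⟨-, hw⟩, rfl⟩ := hx
      obtain ⟨⟨v', w'⟩, ⟨-, hw'⟩, rfl⟩ := hy
      obtain ⟨hv, hadj'⟩ := (corona_adj_inr_inr G H).mp hadj
      subst hv
      exact hind w hw w' hw' (fun hc => hxy (by rw [hc])) hadj'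
    have := card_le_indepNum (corona G H) key
    rw [Finset.card_map, Finset.card_product, Finset.card_univ, hcard] at this
    linarith [this]

end Aux4
section Aux5
variable {W : Type*} [Fintype W] (H : SimpleGraph W)

lemma edge_partition :
    indepCount H 2 + Fintype.card H.edgeSet = (Fintype.card W).choose 2 := by
  classical
  have hA2 : (univ.filter fun s : Finset W => s.card = 2).card
      = (Fintype.card W).choose 2 := by
    rw [show (univ.filter fun s : Finset W => s.card = 2)
        = Finset.powersetCard 2 univ from ?_]
    · rw [Finset.card_powersetCard, Finset.card_univ]
    · ext s
      simp [Finset.mem_powersetCard_univ]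
  have hsplit := Finset.card_filter_add_card_filter_not
    (s := univ.filter fun s : Finset W => s.card = 2) (p := fun s => IsIndepSet H s)
  have e1 : ((univ.filter fun s : Finset W => s.card = 2).filter
      (fun s => IsIndepSet H s)).card = indepCount H 2 := by
    rw [Finset.filter_filter, indepCount]
    congr 1
    apply Finset.filter_congr
    intro s _
    exact ⟨fun ⟨h1, h2⟩ => ⟨h2, h1⟩, fun ⟨h1, h2⟩ => ⟨h2, h1⟩⟩
  have e2 : ((univ.filter fun s : Finset W => s.card = 2).filter
      (fun s => ¬ IsIndepSet H s)).card = Fintype.card H.edgeSet := by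
    rw [show Fintype.card H.edgeSet = H.edgeFinset.card from (Set.toFinset_card _).symm]
    symm
    apply Finset.card_nbij
      (i := Sym2.lift ⟨fun a b => ({a, b} : Finset W),
        fun a b => by simp [Finset.pair_comm a b]⟩)
    · intro e he
      induction e with
      | _ a b =>
        rw [Finset.mem_coe, SimpleGraph.mem_edgeFinset, SimpleGraph.mem_edgeSet] at he
        rw [Finset.mem_coe, Finset.mem_filter, Finset.mem_filter]
        refine ⟨⟨Finset.mem_univ _, ?_⟩, ?_⟩
        · simp only [Sym2.lift_mk]
          exact Finset.card_pair (H.ne_of_adj he)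
        · simp only [Sym2.lift_mk]
          intro hind
          exact hind a (by simp) b (by simp) (H.ne_of_adj he) he
    · intro e he e' he' hee
      induction e with
      | _ a b =>
        induction e' with
        | _ c d =>
          rw [Finset.mem_coe, SimpleGraph.mem_edgeFinset, SimpleGraph.mem_edgeSet] at he he'
          simp only [Sym2.lift_mk] at hee
          have hab : a ≠ b := H.ne_of_adj he
          have hcd : c ≠ d := H.ne_of_adj he'
          have ha : a = c ∨ a = d := by
            have : a ∈ ({c, d} : Finset W) := hee ▸ (by simp)
            simpa using this
          have hb : b = c ∨ b = d := by
            have : b ∈ ({c, d} : Finset W) := hee ▸ (by simp)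
            simpa using this
          have hc : c = a ∨ c = b := by
            have : c ∈ ({a, b} : Finset W) := hee ▸ (by simp : c ∈ ({c, d} : Finset W))
            simpa using this
          rw [Sym2.eq_iff]
          rcases ha with rfl | rfl
          · left
            refine ⟨rfl, ?_⟩
            rcases hb with rfl | rfl
            · exact absurd rfl hab
            · rfl
          · right
            refine ⟨rfl, ?_⟩
            rcases hc with rfl | rfl
            · exact absurd rfl hcd
            · rfl
    · intro s hs
      rw [Finset.coe_filter] at hs
      obtain ⟨hs1, hs2⟩ := hs
      rw [Finset.mem_filter] at hs1
      obtain ⟨x, y, hxy, rfl⟩ := Finset.card_eq_two.mp hs1.2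
      rw [IsIndepSet] at hs2
      push_neg at hs2
      obtain ⟨u, hu, v, hv, huv, hadj⟩ := hs2
      simp only [Finset.mem_insert, Finset.mem_singleton] at hu hv
      have hxyadj : H.Adj x y := by
        rcases hu with rfl | rfl <;> rcases hv with rfl | rfl
        · exact absurd rfl huv
        · exact hadj
        · exact hadj.symm
        · exact absurd rfl huv
      refine ⟨s(x, y), ?_, ?_⟩
      · rw [Finset.mem_coe, SimpleGraph.mem_edgeFinset, SimpleGraph.mem_edgeSet]
        exact hxyadj
      · simp [Sym2.lift_mk]
  omega

lemma indepCount_two_pos (hH : indepNum H = 2) : 1 ≤ indepCount H 2 := by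
  obtain ⟨s, hind, hcard⟩ := exists_indep_card_indepNum H
  rw [hH] at hcard
  rw [indepCount]
  exact Finset.card_pos.mpr ⟨s, by rw [mem_filter]; exact ⟨Finset.mem_univ _, hind, hcard⟩⟩

end Aux5

section Main
variable {V W : Type*} [Fintype V] [Fintype W] (G : SimpleGraph V) (H : SimpleGraph W)

lemma main_nat (hH : indepNum H = 2) :
    ∀ i ≤ Fintype.card V,
      indepCount (corona G H) (2 * Fintype.card V - i)
        = indepCount H 2 ^ (Fintype.card V - i) * indepCount (corona G H) i := by
  intro i hi
  set n := Fintype.card V with hn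
  rw [corona_count, corona_count, Finset.mul_sum]
  refine Finset.sum_congr rfl fun A hA => ?_
  rw [mem_filter] at hA
  have hAn : A.card ≤ n := by
    rw [hn, ← Finset.card_univ]
    exact Finset.card_le_card (Finset.subset_univ _)
  have hcompl : Aᶜ.card = n - A.card := by rw [Finset.card_compl, hn]
  by_cases hAi : A.card ≤ i
  · rw [if_pos hAi, if_pos (by omega : A.card ≤ 2 * n - i)]
    have hsym := Fc_sym H hH Aᶜ (i - A.card) (by omega)
    rw [hcompl] at hsym
    rw [show 2 * (n - A.card) - (i - A.card) = 2 * n - i - A.card from by omega,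
      show n - A.card - (i - A.card) = n - i from by omega] at hsym
    rw [hsym]
  · rw [if_neg hAi, mul_zero]
    split_ifs with h2
    · apply Fc_vanish H hH
      rw [hcompl]
      omega
    · rfl

end Main
/-- if `α(H) = 2`, `H` has `p` vertices and `q` edges, then `I(G∘H;x)` is
`f`-symmetric with `f(i) = (p(p-1)/2 - q)^{α/2 - i}`, i.e.
`s_{α-i} = m^{α/2-i} s_i` for all `0 ≤ i ≤ α`, where `m = p(p-1)/2 - q`. -/
theorem corona_indepPoly_f_symmetric {V W : Type*} [Fintype V] [Fintype W]
    (G : SimpleGraph V) (H : SimpleGraph W) (hn : 1 ≤ Fintype.card V)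
    (p q : ℕ) (hp : Fintype.card W = p) (hq : Fintype.card H.edgeSet = q)
    (hH : indepNum H = 2) (m : ℤ)
    (hm : m = (p : ℤ) * ((p : ℤ) - 1) / 2 - (q : ℤ)) :
    ∀ i ≤ indepNum (corona G H),
      (indepCount (corona G H) (indepNum (corona G H) - i) : ℚ) =
        (m : ℚ) ^ (((indepNum (corona G H) / 2 : ℕ) : ℤ) - (i : ℤ)) *
          (indepCount (corona G H) i : ℚ) := by
  intro i hi
  set n := Fintype.card V with hn'
  have hα : indepNum (corona G H) = 2 * n := indepNum_corona G H hH
  rw [hα] at hi ⊢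
  rw [show (2 * n) / 2 = n from by omega]
  have hedge := edge_partition H
  rw [hp, hq] at hedge
  have hchoose : p * (p - 1) = 2 * p.choose 2 := by
    rcases Nat.eq_zero_or_pos p with h0 | h1
    · subst h0; simp
    · rw [Nat.choose_two_right]
      have h2 : 2 ∣ p * (p - 1) := by
        rcases Nat.even_or_odd p with he | ho
        · exact Dvd.dvd.mul_right he.two_dvd _
        · have : Even (p - 1) := Nat.Odd.sub_odd ho odd_one
          exact Dvd.dvd.mul_left this.two_dvd _
      omega
  have hm2 : (m : ℚ) = (indepCount H 2 : ℚ) := by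
    have hz : ((p : ℤ) * ((p : ℤ) - 1)) = 2 * (p.choose 2 : ℤ) := by
      rcases Nat.eq_zero_or_pos p with h0 | h1
      · subst h0; simp
      · have h2 : ((p : ℤ) - 1) = ((p - 1 : ℕ) : ℤ) := by omega
        rw [h2, ← Nat.cast_mul, hchoose]
        push_cast
        ring
    have hmz : m = (indepCount H 2 : ℤ) := by
      rw [hm, hz, Int.mul_ediv_cancel_left _ (by norm_num : (2 : ℤ) ≠ 0)]
      omega
    exact_mod_cast hmz
  have hm'pos := indepCount_two_pos H hH
  have hm'0 : ((indepCount H 2 : ℚ)) ≠ 0 := by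
    have : (0 : ℚ) < (indepCount H 2 : ℚ) := by exact_mod_cast hm'pos
    exact ne_of_gt this
  rw [hm2]
  rcases le_or_gt i n with hin | hin
  · have hmain := main_nat G H hH i hin
    rw [show ((n : ℤ) - (i : ℤ)) = ((n - i : ℕ) : ℤ) from by omega, zpow_natCast, hmain]
    push_cast
    ring
  · have hmain := main_nat G H hH (2 * n - i) (by omega)
    rw [show 2 * n - (2 * n - i) = i from by omega,
      show n - (2 * n - i) = i - n from by omega] at hmain
    have hcast : (indepCount (corona G H) i : ℚ)
        = (indepCount H 2 : ℚ) ^ (i - n) * (indepCount (corona G H) (2 * n - i) : ℚ) := by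
      exact_mod_cast hmain
    rw [hcast, show ((n : ℤ) - (i : ℤ)) = -(((i - n : ℕ) : ℤ)) from by omega,
      zpow_neg, zpow_natCast, inv_mul_cancel_left₀ (pow_ne_zero _ hm'0)]
end

section
/- Let G be a finite simple graph of order n ≥ 1, and let H be a finite simple graph with p vertices and q edges such that α(H) = 2. Then the independence polynomial I(G∘H;x) is symmetric if and only if p(p−1)/2 − q = 1, i.e., if and only if H is isomorphic to K_p − e, the complete graph on p vertices with one edge removed. -/
open Polynomial Finset
open scoped Classical

namespace CoronaAux

open Finset

variable {V W : Type*} [Fintype V] [Fintype W]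

/-- The "key" of a corona vertex: which copy it lives over. -/
def ckey : V ⊕ V × W → V := Sum.elim id Prod.fst

/-- The fiber of a vertex subset of the corona over `v`, inside the copy of `H`. -/
noncomputable def fib (S : Finset (V ⊕ V × W)) (v : V) : Finset W :=
  univ.filter fun w => Sum.inr (v, w) ∈ S

lemma mem_fib {S : Finset (V ⊕ V × W)} {v : V} {w : W} :
    w ∈ fib S v ↔ Sum.inr (v, w) ∈ S := by simp [fib]

variable {G : SimpleGraph V} {H : SimpleGraph W}

lemma indep_card_le_indepNum {s : Finset W} (hs : IsIndepSet H s) : s.card ≤ indepNum H :=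
  Finset.le_sup (by simp [hs])

lemma exists_indep_card_eq_indepNum (H : SimpleGraph W) :
    ∃ s : Finset W, IsIndepSet H s ∧ s.card = indepNum H := by
  obtain ⟨s, hs, h⟩ := Finset.exists_mem_eq_sup
    (univ.filter fun s : Finset W => IsIndepSet H s) ⟨∅, Finset.mem_filter.mpr ⟨mem_univ _, fun u hu => by simp at hu⟩⟩ Finset.card
  exact ⟨s, (mem_filter.mp hs).2, h.symm⟩

lemma exists_indep_pair (hH : indepNum H = 2) :
    ∃ P : Finset W, IsIndepSet H P ∧ P.card = 2 := by
  obtain ⟨P, h1, h2⟩ := exists_indep_card_eq_indepNum H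
  exact ⟨P, h1, by rw [h2, hH]⟩

lemma indepCount_zero {α : Type*} [Fintype α] (G : SimpleGraph α) : indepCount G 0 = 1 := by
  have h : (univ.filter fun s : Finset α => IsIndepSet G s ∧ s.card = 0) = {∅} := by
    ext s
    simp only [mem_filter, mem_univ, true_and, Finset.mem_singleton, Finset.card_eq_zero]
    constructor
    · rintro ⟨-, rfl⟩; rfl
    · rintro rfl; exact ⟨by simp [IsIndepSet], rfl⟩
  show (univ.filter fun s : Finset α => IsIndepSet G s ∧ s.card = 0).card = 1
  rw [h, Finset.card_singleton]

lemma filter_ckey_eq (S : Finset (V ⊕ V × W)) (v : V) :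
    S.filter (fun x => ckey x = v) =
      (if Sum.inl v ∈ S then {Sum.inl v} else ∅) ∪ (fib S v).image (fun w => Sum.inr (v, w)) := by
  ext x
  rcases x with u | ⟨u, w⟩
  · by_cases h : Sum.inl v ∈ S <;> simp only [Finset.mem_filter] <;> simp [ckey, h, mem_fib] <;> aesop
  · by_cases h : Sum.inl v ∈ S <;> simp only [Finset.mem_filter] <;> simp [ckey, h, mem_fib] <;> aesop

lemma card_filter_ckey (S : Finset (V ⊕ V × W)) (v : V) :
    (S.filter (fun x => ckey x = v)).card =
      (if Sum.inl v ∈ S then 1 else 0) + (fib S v).card := by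
  have hdisj : Disjoint (if Sum.inl v ∈ S then ({Sum.inl v} : Finset (V ⊕ V × W)) else ∅)
      ((fib S v).image (fun w => Sum.inr (v, w))) := by
    by_cases h : Sum.inl v ∈ S <;> simp [h, Finset.disjoint_left]
  rw [filter_ckey_eq, Finset.card_union_of_disjoint hdisj,
    Finset.card_image_of_injective _ (fun a b hab => by simpa using hab)]
  congr 1
  split <;> simp

lemma card_eq_sum_fib (S : Finset (V ⊕ V × W)) :
    S.card = ∑ v : V, ((if Sum.inl v ∈ S then 1 else 0) + (fib S v).card) := by
  rw [Finset.card_eq_sum_card_fiberwise (f := ckey) (t := univ) (fun x _ => mem_univ _)]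
  exact Finset.sum_congr rfl fun v _ => card_filter_ckey S v

lemma fib_indep {S : Finset (V ⊕ V × W)} (hS : IsIndepSet (corona G H) S) (v : V) :
    IsIndepSet H (fib S v) := by
  intro w hw w' hw' hne hadj
  exact hS _ (mem_fib.mp hw) _ (mem_fib.mp hw') (by simp [hne]) ⟨rfl, hadj⟩

lemma fib_eq_empty_of_inl_mem {S : Finset (V ⊕ V × W)} (hS : IsIndepSet (corona G H) S) {v : V}
    (hv : Sum.inl v ∈ S) : fib S v = ∅ := by
  ext w
  simp only [mem_fib, Finset.notMem_empty, iff_false]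
  intro hw
  exact hS _ hv _ hw (by simp) rfl

lemma contrib_le_two {S : Finset (V ⊕ V × W)} (hS : IsIndepSet (corona G H) S)
    (hH : indepNum H = 2) (v : V) :
    (if Sum.inl v ∈ S then 1 else 0) + (fib S v).card ≤ 2 := by
  by_cases h : Sum.inl v ∈ S
  · simp [h, fib_eq_empty_of_inl_mem hS h]
  · simpa [h] using hH ▸ indep_card_le_indepNum (fib_indep hS v)

lemma indep_card_le_two_mul {S : Finset (V ⊕ V × W)} (hS : IsIndepSet (corona G H) S)
    (hH : indepNum H = 2) : S.card ≤ 2 * Fintype.card V := by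
  rw [card_eq_sum_fib]
  calc ∑ v : V, ((if Sum.inl v ∈ S then 1 else 0) + (fib S v).card)
      ≤ ∑ _v : V, 2 := Finset.sum_le_sum fun v _ => contrib_le_two hS hH v
    _ = 2 * Fintype.card V := by simp [mul_comm]

/-- The independent set of the corona using pair `P` in every copy. -/
noncomputable def allCopies (P : Finset W) : Finset (V ⊕ V × W) :=
  ((univ : Finset V) ×ˢ P).image Sum.inr

lemma mem_allCopies_inr {P : Finset W} {v : V} {w : W} :
    Sum.inr (v, w) ∈ (allCopies P : Finset (V ⊕ V × W)) ↔ w ∈ P := by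
  simp [allCopies]

lemma mem_allCopies {P : Finset W} {x : V ⊕ V × W} :
    x ∈ (allCopies P : Finset (V ⊕ V × W)) ↔ ∃ v w, w ∈ P ∧ x = Sum.inr (v, w) := by
  simp only [allCopies, Finset.mem_image, Finset.mem_product, mem_univ, true_and, Prod.exists]
  aesop

lemma allCopies_indep {P : Finset W} (hP : IsIndepSet H P) :
    IsIndepSet (corona G H) (allCopies P) := by
  intro x hx y hy hne hadj
  obtain ⟨v, w, hw, rfl⟩ := mem_allCopies.mp hx
  obtain ⟨v', w', hw', rfl⟩ := mem_allCopies.mp hy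
  obtain ⟨rfl, hadj'⟩ := hadj
  exact hP w hw w' hw' hadj'.ne hadj'

lemma allCopies_card {P : Finset W} :
    (allCopies P : Finset (V ⊕ V × W)).card = Fintype.card V * P.card := by
  rw [allCopies, Finset.card_image_of_injective _ Sum.inr_injective, Finset.card_product]
  simp

lemma allCopies_inj {P Q : Finset W} (v0 : V)
    (h : (allCopies P : Finset (V ⊕ V × W)) = allCopies Q) : P = Q := by
  ext w
  rw [← mem_allCopies_inr (v := v0) (P := P), ← mem_allCopies_inr (v := v0) (P := Q), h]

lemma indepNum_corona (hH : indepNum H = 2) :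
    indepNum (corona G H) = 2 * Fintype.card V := by
  obtain ⟨P, hP, hPc⟩ := exists_indep_pair hH
  apply le_antisymm
  · exact Finset.sup_le fun s hs => indep_card_le_two_mul (mem_filter.mp hs).2 hH
  · have h := indep_card_le_indepNum (H := corona G H) (allCopies_indep (G := G) hP)
    rwa [allCopies_card, hPc, mul_comm] at h

lemma indepCount_H_two_le_one
    (hcount : indepCount (corona G H) (2 * Fintype.card V) = 1) (v0 : V) :
    indepCount H 2 ≤ 1 := by
  have hle : (univ.filter fun s : Finset (V ⊕ V × W) =>
      IsIndepSet (corona G H) s ∧ s.card = 2 * Fintype.card V).card ≤ 1 := le_of_eq hcount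
  apply Finset.card_le_one.mpr
  intro P hP Q hQ
  simp only [mem_filter, mem_univ, true_and] at hP hQ
  have hmem : ∀ R : Finset W, IsIndepSet H R → R.card = 2 →
      (allCopies R : Finset (V ⊕ V × W)) ∈ univ.filter (fun s =>
        IsIndepSet (corona G H) s ∧ s.card = 2 * Fintype.card V) := by
    intro R hR hRc
    simp only [mem_filter, mem_univ, true_and]
    exact ⟨allCopies_indep hR, by rw [allCopies_card, hRc, mul_comm]⟩
  exact allCopies_inj v0
    (Finset.card_le_one.mp hle _ (hmem P hP.1 hP.2) _ (hmem Q hQ.1 hQ.2))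

lemma one_le_indepCount_H_two (hH : indepNum H = 2) : 1 ≤ indepCount H 2 := by
  obtain ⟨P, hP, hPc⟩ := exists_indep_pair hH
  exact Finset.card_pos.mpr ⟨P, by simp [hP, hPc]⟩

/-! ### Counting pairs: `p(p-1) = 2q + 2r` -/

/-- Darts of `H` are the same as ordered adjacent pairs. -/
def dartEquiv (H : SimpleGraph W) : H.Dart ≃ {x : W × W // H.Adj x.1 x.2} where
  toFun d := ⟨d.toProd, d.adj⟩
  invFun x := ⟨x.1, x.2⟩
  left_inv d := rfl
  right_inv x := rfl

lemma card_adj_pairs (H : SimpleGraph W) :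
    ((univ : Finset W).offDiag.filter fun x : W × W => H.Adj x.1 x.2).card =
      2 * Fintype.card H.edgeSet := by
  classical
  have h1 : (univ : Finset W).offDiag.filter (fun x : W × W => H.Adj x.1 x.2) =
      univ.filter (fun x : W × W => H.Adj x.1 x.2) := by
    ext x
    simp only [mem_filter, Finset.mem_offDiag, mem_univ, true_and]
    exact ⟨fun h => h.2, fun h => ⟨h.ne, h⟩⟩
  rw [h1, ← Fintype.card_subtype]
  rw [← Fintype.card_congr (dartEquiv H)]
  rw [SimpleGraph.dart_card_eq_twice_card_edges]
  congr 1
  rw [SimpleGraph.edgeFinset, Set.toFinset_card]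

lemma card_nonadj_pairs (H : SimpleGraph W) :
    ((univ : Finset W).offDiag.filter fun x : W × W => ¬ H.Adj x.1 x.2).card =
      2 * indepCount H 2 := by
  classical
  set T := (univ : Finset W).offDiag.filter (fun x : W × W => ¬ H.Adj x.1 x.2) with hT
  set R := univ.filter (fun s : Finset W => IsIndepSet H s ∧ s.card = 2) with hR
  have hmap : ∀ x ∈ T, ({x.1, x.2} : Finset W) ∈ R := by
    intro x hx
    simp only [hT, mem_filter, Finset.mem_offDiag, mem_univ, true_and] at hx
    obtain ⟨hne, hnadj⟩ := hx
    simp only [hR, mem_filter, mem_univ, true_and]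
    refine ⟨?_, Finset.card_pair hne⟩
    intro u hu v hv huv hadj
    simp only [Finset.mem_insert, Finset.mem_singleton] at hu hv
    rcases hu with rfl | rfl <;> rcases hv with rfl | rfl
    · exact huv rfl
    · exact hnadj hadj
    · exact hnadj (H.adj_symm hadj)
    · exact huv rfl
  rw [Finset.card_eq_sum_card_fiberwise hmap]
  have hfib : ∀ s ∈ R, (T.filter fun x => ({x.1, x.2} : Finset W) = s).card = 2 := by
    intro s hs
    simp only [hR, mem_filter, mem_univ, true_and] at hs
    obtain ⟨hind, hc⟩ := hs
    obtain ⟨a, b, hab, rfl⟩ := Finset.card_eq_two.mp hc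
    have hnadj : ¬ H.Adj a b := hind a (by simp) b (by simp) hab
    have heq : T.filter (fun x : W × W => ({x.1, x.2} : Finset W) = {a, b}) =
        {(a, b), (b, a)} := by
      ext x
      simp only [mem_filter, hT, Finset.mem_offDiag, mem_univ, true_and,
        Finset.mem_insert, Finset.mem_singleton]
      constructor
      · rintro ⟨⟨hne, -⟩, hpair⟩
        have h1 : x.1 ∈ ({a, b} : Finset W) := by rw [← hpair]; simp
        have h2 : x.2 ∈ ({a, b} : Finset W) := by rw [← hpair]; simp
        simp only [Finset.mem_insert, Finset.mem_singleton] at h1 h2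
        rcases h1 with h1 | h1 <;> rcases h2 with h2 | h2
        · exact absurd (h1.trans h2.symm) hne
        · left; exact Prod.ext h1 h2
        · right; exact Prod.ext h1 h2
        · exact absurd (h1.trans h2.symm) hne
      · rintro (rfl | rfl)
        · exact ⟨⟨hab, hnadj⟩, rfl⟩
        · exact ⟨⟨hab.symm, fun h => hnadj (H.adj_symm h)⟩,
            Finset.pair_comm b a⟩
    rw [heq, Finset.card_insert_of_notMem (by simp [Prod.ext_iff]; exact fun h _ => hab h),
      Finset.card_singleton]
  rw [Finset.sum_congr rfl hfib, Finset.sum_const, smul_eq_mul, mul_comm]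
  rfl

lemma count_pairs (H : SimpleGraph W) :
    Fintype.card W * (Fintype.card W - 1) =
      2 * Fintype.card H.edgeSet + 2 * indepCount H 2 := by
  classical
  have hsplit := Finset.card_filter_add_card_filter_not
    (s := (univ : Finset W).offDiag) (p := fun x : W × W => H.Adj x.1 x.2)
  have hbeta : (Finset.filter (fun a => ¬(fun x : W × W => H.Adj x.1 x.2) a)
      (univ : Finset W).offDiag) =
      (univ : Finset W).offDiag.filter (fun x : W × W => ¬ H.Adj x.1 x.2) := rfl
  rw [hbeta, card_adj_pairs, card_nonadj_pairs, Finset.offDiag_card,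
    Finset.card_univ] at hsplit
  have hm : Fintype.card W * (Fintype.card W - 1) =
      Fintype.card W * Fintype.card W - Fintype.card W := by
    cases Fintype.card W with
    | zero => simp
    | succ n => rw [Nat.add_sub_cancel, Nat.mul_succ, Nat.add_sub_cancel]
  rw [hm, ← hsplit]

lemma int_eq_iff {p q r : ℕ} (h : p * (p - 1) = 2 * q + 2 * r) :
    ((p : ℤ) * ((p : ℤ) - 1) / 2 - (q : ℤ) = 1) ↔ r = 1 := by
  have hcast : (p : ℤ) * ((p : ℤ) - 1) = 2 * q + 2 * r := by
    cases p with
    | zero => simp at h ⊢; omega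
    | succ n =>
      have h' : ((n : ℤ) + 1) * n = 2 * q + 2 * r := by
        exact_mod_cast (by simpa using h : (n + 1) * n = 2 * q + 2 * r)
      push_cast
      linear_combination h'
  rw [hcast]
  omega

/-! ### The involution for the symmetric direction -/

/-- Size-complementing involution on independent sets of `H` (when there is a
unique independent pair `P0`). -/
noncomputable def iota (P0 : Finset W) (s : Finset W) : Finset W :=
  if s = ∅ then P0 else if s.card = 2 then ∅ else s

lemma iota_indep {P0 s : Finset W} (hP0 : IsIndepSet H P0) (hs : IsIndepSet H s) :
    IsIndepSet H (iota P0 s) := by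
  unfold iota
  split
  · exact hP0
  · split
    · intro u hu; simp at hu
    · exact hs

lemma card_iota {P0 s : Finset W} (hP0c : P0.card = 2) (hH : indepNum H = 2)
    (hs : IsIndepSet H s) : (iota P0 s).card = 2 - s.card := by
  unfold iota
  split
  · next h => simp [h, hP0c]
  · next h =>
    split
    · next h2 => simp [h2]
    · next h2 =>
      have h1 : s.card ≤ 2 := hH ▸ indep_card_le_indepNum hs
      have h0 : s.card ≠ 0 := fun hc => h (Finset.card_eq_zero.mp hc)
      omega

lemma iota_iota {P0 s : Finset W} (hP0c : P0.card = 2)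
    (huniq : ∀ t : Finset W, IsIndepSet H t → t.card = 2 → t = P0)
    (hs : IsIndepSet H s) : iota P0 (iota P0 s) = s := by
  have hP0ne : P0 ≠ ∅ := by
    intro h; rw [h] at hP0c; simp at hP0c
  by_cases h0 : s = ∅
  · subst h0
    simp [iota, hP0ne, hP0c]
  · by_cases h2 : s.card = 2
    · have hsP := huniq s hs h2
      subst hsP
      simp [iota, h0, h2, hP0c]
    · simp [iota, h0, h2]

/-- The involution on independent sets of the corona. -/
noncomputable def phi (P0 : Finset W) (S : Finset (V ⊕ V × W)) : Finset (V ⊕ V × W) :=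
  univ.filter (Sum.elim (fun v => Sum.inl v ∈ S)
    (fun p => Sum.inl p.1 ∉ S ∧ p.2 ∈ iota P0 (fib S p.1)))

lemma inl_mem_phi {P0 : Finset W} {S : Finset (V ⊕ V × W)} {v : V} :
    Sum.inl v ∈ phi P0 S ↔ Sum.inl v ∈ S := by simp [phi]

lemma inr_mem_phi {P0 : Finset W} {S : Finset (V ⊕ V × W)} {v : V} {w : W} :
    Sum.inr (v, w) ∈ phi P0 S ↔ Sum.inl v ∉ S ∧ w ∈ iota P0 (fib S v) := by simp [phi]

lemma fib_phi (P0 : Finset W) (S : Finset (V ⊕ V × W)) (v : V) :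
    fib (phi P0 S) v = if Sum.inl v ∈ S then ∅ else iota P0 (fib S v) := by
  ext w
  rw [mem_fib, inr_mem_phi]
  by_cases h : Sum.inl v ∈ S <;> simp [h]

lemma phi_indep {P0 : Finset W} {S : Finset (V ⊕ V × W)} (hP0 : IsIndepSet H P0)
    (hS : IsIndepSet (corona G H) S) : IsIndepSet (corona G H) (phi P0 S) := by
  intro x hx y hy hne hadj
  rcases x with u | ⟨v, w⟩ <;> rcases y with u' | ⟨v', w'⟩
  · exact hS _ (inl_mem_phi.mp hx) _ (inl_mem_phi.mp hy) hne hadj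
  · obtain ⟨hnv, -⟩ := inr_mem_phi.mp hy
    have h : u = v' := hadj
    exact hnv (h ▸ inl_mem_phi.mp hx)
  · obtain ⟨hnv, -⟩ := inr_mem_phi.mp hx
    have h : u' = v := hadj
    exact hnv (h ▸ inl_mem_phi.mp hy)
  · obtain ⟨rfl, hadj'⟩ := hadj
    obtain ⟨-, hw⟩ := inr_mem_phi.mp hx
    obtain ⟨-, hw'⟩ := inr_mem_phi.mp hy
    exact iota_indep hP0 (fib_indep hS v) w hw w' hw' hadj'.ne hadj'

lemma card_add_card_phi {P0 : Finset W} {S : Finset (V ⊕ V × W)}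
    (hP0c : P0.card = 2) (hH : indepNum H = 2)
    (hS : IsIndepSet (corona G H) S) :
    S.card + (phi P0 S).card = 2 * Fintype.card V := by
  rw [card_eq_sum_fib S, card_eq_sum_fib (phi P0 S), ← Finset.sum_add_distrib,
    show 2 * Fintype.card V = ∑ _v : V, 2 by simp [mul_comm]]
  refine Finset.sum_congr rfl fun v _ => ?_
  by_cases h : Sum.inl v ∈ S
  · simp [h, inl_mem_phi, fib_phi, fib_eq_empty_of_inl_mem hS h]
  · have h1 : (fib S v).card ≤ 2 := hH ▸ indep_card_le_indepNum (fib_indep hS v)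
    simp only [h, if_false, inl_mem_phi, fib_phi,
      card_iota hP0c hH (fib_indep hS v)]
    omega

lemma phi_phi {P0 : Finset W} {S : Finset (V ⊕ V × W)} (hP0c : P0.card = 2)
    (huniq : ∀ t : Finset W, IsIndepSet H t → t.card = 2 → t = P0)
    (hS : IsIndepSet (corona G H) S) : phi P0 (phi P0 S) = S := by
  ext x
  rcases x with u | ⟨v, w⟩
  · rw [inl_mem_phi, inl_mem_phi]
  · rw [inr_mem_phi, inl_mem_phi, fib_phi]
    by_cases h : Sum.inl v ∈ S
    · simp only [h, not_true_eq_false, false_and, false_iff]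
      intro hw
      have := fib_eq_empty_of_inl_mem hS h
      have hwf : w ∈ fib S v := mem_fib.mpr hw
      rw [this] at hwf
      simp at hwf
    · simp only [h, not_false_eq_true, true_and, if_false,
        iota_iota hP0c huniq (fib_indep hS v), mem_fib]

lemma indepCount_corona_symm {P0 : Finset W} (hP0 : IsIndepSet H P0) (hP0c : P0.card = 2)
    (huniq : ∀ t : Finset W, IsIndepSet H t → t.card = 2 → t = P0)
    (hH : indepNum H = 2) {i : ℕ} (hi : i ≤ 2 * Fintype.card V) :
    indepCount (corona G H) i = indepCount (corona G H) (2 * Fintype.card V - i) := by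
  show (univ.filter fun s : Finset (V ⊕ V × W) =>
      IsIndepSet (corona G H) s ∧ s.card = i).card =
    (univ.filter fun s : Finset (V ⊕ V × W) =>
      IsIndepSet (corona G H) s ∧ s.card = 2 * Fintype.card V - i).card
  refine Finset.card_bij' (fun S _ => phi P0 S) (fun S _ => phi P0 S) ?_ ?_ ?_ ?_
  · intro S hS
    simp only [mem_filter, mem_univ, true_and] at hS ⊢
    refine ⟨phi_indep hP0 hS.1, ?_⟩
    have := card_add_card_phi hP0c hH hS.1
    omega
  · intro S hS
    simp only [mem_filter, mem_univ, true_and] at hS ⊢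
    refine ⟨phi_indep hP0 hS.1, ?_⟩
    have := card_add_card_phi hP0c hH hS.1
    omega
  · intro S hS
    simp only [mem_filter, mem_univ, true_and] at hS
    exact phi_phi hP0c huniq hS.1
  · intro S hS
    simp only [mem_filter, mem_univ, true_and] at hS
    exact phi_phi hP0c huniq hS.1

lemma uniq_of_count_one {P0 : Finset W} (hr : indepCount H 2 = 1)
    (hP0 : IsIndepSet H P0) (hP0c : P0.card = 2) :
    ∀ s : Finset W, IsIndepSet H s → s.card = 2 → s = P0 := by
  intro s hs hsc
  have hle : (univ.filter fun s : Finset W => IsIndepSet H s ∧ s.card = 2).card ≤ 1 :=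
    le_of_eq hr
  exact Finset.card_le_one.mp hle _ (by simp [hs, hsc]) _ (by simp [hP0, hP0c])

/-! ### The isomorphism with `K_p - e` -/

lemma indepCount_iso {α β : Type*} [Fintype α] [Fintype β] {A : SimpleGraph α}
    {B : SimpleGraph β} (φ : A ≃g B) (k : ℕ) : indepCount A k = indepCount B k := by
  show (univ.filter fun s : Finset α => IsIndepSet A s ∧ s.card = k).card =
    (univ.filter fun s : Finset β => IsIndepSet B s ∧ s.card = k).card
  refine Finset.card_bij' (fun s _ => s.image φ) (fun s _ => s.image φ.symm) ?_ ?_ ?_ ?_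
  · intro s hs
    simp only [mem_filter, mem_univ, true_and] at hs ⊢
    constructor
    · intro x hx y hy hne hadj
      obtain ⟨u, hu, rfl⟩ := Finset.mem_image.mp hx
      obtain ⟨v, hv, rfl⟩ := Finset.mem_image.mp hy
      exact hs.1 u hu v hv (fun h => hne (by rw [h])) (φ.map_rel_iff.mp hadj)
    · rw [Finset.card_image_of_injective _ (RelIso.injective φ), hs.2]
  · intro s hs
    simp only [mem_filter, mem_univ, true_and] at hs ⊢
    constructor
    · intro x hx y hy hne hadj
      obtain ⟨u, hu, rfl⟩ := Finset.mem_image.mp hx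
      obtain ⟨v, hv, rfl⟩ := Finset.mem_image.mp hy
      exact hs.1 u hu v hv (fun h => hne (by rw [h])) (φ.symm.map_rel_iff.mp hadj)
    · rw [Finset.card_image_of_injective _ (RelIso.injective φ.symm), hs.2]
  · intro s hs
    ext x
    simp [Finset.image_image, Function.comp]
  · intro s hs
    ext x
    simp [Finset.image_image, Function.comp]

lemma indepCount_completeMinusEdge {p : ℕ} (hp2 : 2 ≤ p) :
    indepCount (completeMinusEdge p) 2 = 1 := by
  have h0 : (0 : ℕ) < p := by omega
  have h1 : (1 : ℕ) < p := by omega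
  have heq : (univ.filter fun s : Finset (Fin p) =>
      IsIndepSet (completeMinusEdge p) s ∧ s.card = 2)
      = {({⟨0, h0⟩, ⟨1, h1⟩} : Finset (Fin p))} := by
    ext s
    simp only [mem_filter, mem_univ, true_and, Finset.mem_singleton]
    constructor
    · rintro ⟨hind, hc⟩
      obtain ⟨x, y, hxy, rfl⟩ := Finset.card_eq_two.mp hc
      have hnadj : ¬ (completeMinusEdge p).Adj x y := hind x (by simp) y (by simp) hxy
      have hv : x.val ≤ 1 ∧ y.val ≤ 1 := by
        by_contra hcon
        exact hnadj (show x ≠ y ∧ ¬(x.val ≤ 1 ∧ y.val ≤ 1) from ⟨hxy, hcon⟩)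
      have hx01 : x = ⟨0, h0⟩ ∨ x = ⟨1, h1⟩ := by
        rcases Nat.le_one_iff_eq_zero_or_eq_one.mp hv.1 with h | h
        · left; exact Fin.ext h
        · right; exact Fin.ext h
      have hy01 : y = ⟨0, h0⟩ ∨ y = ⟨1, h1⟩ := by
        rcases Nat.le_one_iff_eq_zero_or_eq_one.mp hv.2 with h | h
        · left; exact Fin.ext h
        · right; exact Fin.ext h
      rcases hx01 with rfl | rfl <;> rcases hy01 with rfl | rfl
      · exact absurd rfl hxy
      · rfl
      · exact Finset.pair_comm _ _
      · exact absurd rfl hxy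
    · rintro rfl
      refine ⟨?_, Finset.card_pair (by simp [Fin.ext_iff])⟩
      intro u hu v hv huv hadj
      simp only [Finset.mem_insert, Finset.mem_singleton] at hu hv
      obtain ⟨-, h2⟩ := (hadj : u ≠ v ∧ ¬(u.val ≤ 1 ∧ v.val ≤ 1))
      apply h2
      rcases hu with rfl | rfl <;> rcases hv with rfl | rfl <;> simp
  show (univ.filter fun s : Finset (Fin p) =>
      IsIndepSet (completeMinusEdge p) s ∧ s.card = 2).card = 1
  rw [heq, Finset.card_singleton]

lemma exists_good_equiv {α : Type*} [Fintype α] {p : ℕ} (hp : Fintype.card α = p)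
    {a b : α} (hab : a ≠ b) (hp2 : 2 ≤ p) :
    ∃ e : α ≃ Fin p, (e a).val = 0 ∧ (e b).val = 1 := by
  have h0 : (0 : ℕ) < p := by omega
  have h1 : (1 : ℕ) < p := by omega
  set f0 : Fin p := ⟨0, h0⟩
  set f1 : Fin p := ⟨1, h1⟩
  obtain e0 := Fintype.equivFinOfCardEq hp
  set σ := Equiv.swap (e0 a) f0 with hσ
  set τ := Equiv.swap (σ (e0 b)) f1 with hτ
  refine ⟨e0.trans (σ.trans τ), ?_, ?_⟩
  · show (τ (σ (e0 a))).val = 0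
    have hsa : σ (e0 a) = f0 := Equiv.swap_apply_left _ _
    rw [hsa]
    have hne1 : f0 ≠ σ (e0 b) := by
      rw [← hsa]
      exact fun h => hab (e0.injective (σ.injective h.symm)).symm
    have hne2 : f0 ≠ f1 := by simp [f0, f1, Fin.ext_iff]
    rw [Equiv.swap_apply_of_ne_of_ne hne1 hne2]
  · show (τ (σ (e0 b))).val = 1
    rw [hτ, Equiv.swap_apply_left]

lemma count_one_iff_iso {p : ℕ} (hH : indepNum H = 2) (hp : Fintype.card W = p) :
    indepCount H 2 = 1 ↔ Nonempty (H ≃g completeMinusEdge p) := by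
  obtain ⟨P0, hP0, hP0c⟩ := exists_indep_pair hH
  have hp2 : 2 ≤ p := by
    have h := Finset.card_le_univ P0
    omega
  constructor
  · intro hr
    have huniq := uniq_of_count_one hr hP0 hP0c
    obtain ⟨a, b, hab, rfl⟩ := Finset.card_eq_two.mp hP0c
    have hnadj : ¬ H.Adj a b := hP0 a (by simp) b (by simp) hab
    have hadjall : ∀ u v : W, u ≠ v → ¬(u = a ∧ v = b) → ¬(u = b ∧ v = a) → H.Adj u v := by
      intro u v huv h1 h2
      by_contra hno
      have hind : IsIndepSet H {u, v} := by
        intro x hx y hy hxy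
        simp only [Finset.mem_insert, Finset.mem_singleton] at hx hy
        rcases hx with rfl | rfl <;> rcases hy with rfl | rfl
        · exact absurd rfl hxy
        · exact fun _ => hno ‹H.Adj x y›
        · exact fun h => hno (H.adj_symm h)
        · exact absurd rfl hxy
      have heq := huniq {u, v} hind (Finset.card_pair huv)
      have hu : u ∈ ({a, b} : Finset W) := heq ▸ (by simp : u ∈ ({u, v} : Finset W))
      have hv : v ∈ ({a, b} : Finset W) := heq ▸ (by simp : v ∈ ({u, v} : Finset W))
      simp only [Finset.mem_insert, Finset.mem_singleton] at hu hv
      rcases hu with rfl | rfl <;> rcases hv with rfl | rfl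
      · exact huv rfl
      · exact h1 ⟨rfl, rfl⟩
      · exact h2 ⟨rfl, rfl⟩
      · exact huv rfl
    obtain ⟨e, hea, heb⟩ := exists_good_equiv hp hab hp2
    have hval : ∀ x : W, (e x).val ≤ 1 ↔ (x = a ∨ x = b) := by
      intro x
      constructor
      · intro hx
        rcases Nat.le_one_iff_eq_zero_or_eq_one.mp hx with h | h
        · left; exact e.injective (Fin.ext (h.trans hea.symm))
        · right; exact e.injective (Fin.ext (h.trans heb.symm))
      · rintro (rfl | rfl)
        · simp [hea]
        · simp [heb]
    refine ⟨⟨e, @fun u v => ?_⟩⟩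
    show ((e u ≠ e v) ∧ ¬((e u).val ≤ 1 ∧ (e v).val ≤ 1)) ↔ H.Adj u v
    constructor
    · rintro ⟨hne, hnle⟩
      have huv : u ≠ v := fun h => hne (congrArg e h)
      refine hadjall u v huv ?_ ?_
      · rintro ⟨rfl, rfl⟩
        exact hnle ⟨by simp [hea], by simp [heb]⟩
      · rintro ⟨rfl, rfl⟩
        exact hnle ⟨by simp [heb], by simp [hea]⟩
    · intro hadj
      refine ⟨fun h => hadj.ne (e.injective h), ?_⟩
      rintro ⟨h1, h2⟩
      rcases (hval u).mp h1 with rfl | rfl <;> rcases (hval v).mp h2 with rfl | rfl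
      · exact hadj.ne rfl
      · exact hnadj hadj
      · exact hnadj (H.adj_symm hadj)
      · exact hadj.ne rfl
  · rintro ⟨φ⟩
    rw [indepCount_iso φ 2, indepCount_completeMinusEdge hp2]

end CoronaAux

/-- if `α(H) = 2`, `H` has `p` vertices and `q` edges, then `I(G∘H;x)` is
symmetric iff `p(p-1)/2 - q = 1`, i.e. iff `H ≅ K_p - e`. -/
theorem corona_indepPoly_symmetric_iff {V W : Type*} [Fintype V] [Fintype W]
    (G : SimpleGraph V) (H : SimpleGraph W) (hn : 1 ≤ Fintype.card V)
    (p q : ℕ) (hp : Fintype.card W = p) (hq : Fintype.card H.edgeSet = q)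
    (hH : indepNum H = 2) :
    ((∀ i ≤ indepNum (corona G H) / 2,
        indepCount (corona G H) i =
          indepCount (corona G H) (indepNum (corona G H) - i)) ↔
      (p : ℤ) * ((p : ℤ) - 1) / 2 - (q : ℤ) = 1) ∧
    ((∀ i ≤ indepNum (corona G H) / 2,
        indepCount (corona G H) i =
          indepCount (corona G H) (indepNum (corona G H) - i)) ↔
      Nonempty (H ≃g completeMinusEdge p)) := by
  classical
  obtain ⟨v0⟩ : Nonempty V := Fintype.card_pos_iff.mp (by omega)
  have hnum : indepNum (corona G H) = 2 * Fintype.card V := CoronaAux.indepNum_corona hH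
  have key : (∀ i ≤ indepNum (corona G H) / 2,
      indepCount (corona G H) i = indepCount (corona G H) (indepNum (corona G H) - i)) ↔
      indepCount H 2 = 1 := by
    constructor
    · intro hsym
      have h0 := hsym 0 (Nat.zero_le _)
      rw [Nat.sub_zero, CoronaAux.indepCount_zero, hnum] at h0
      have hle := CoronaAux.indepCount_H_two_le_one h0.symm v0
      have hge := CoronaAux.one_le_indepCount_H_two hH
      omega
    · intro hr
      obtain ⟨P0, hP0, hP0c⟩ := CoronaAux.exists_indep_pair hH
      have huniq := CoronaAux.uniq_of_count_one hr hP0 hP0c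
      intro i hi
      rw [hnum] at hi ⊢
      have hi' : i ≤ 2 * Fintype.card V := le_trans hi (Nat.div_le_self _ _)
      exact CoronaAux.indepCount_corona_symm hP0 hP0c huniq hH hi'
  have hpair := CoronaAux.count_pairs H
  rw [hp, hq] at hpair
  constructor
  · exact key.trans (CoronaAux.int_eq_iff hpair).symm
  · exact key.trans (CoronaAux.count_one_iff_iso hH hp)
end

section
/- Let G be a finite simple graph of order n ≥ 1 and let p, q ≥ 1. If G is a perfect graph, then the corona G∘(K_p ∪ K_q) is a perfect graph. -/
open Polynomial Finset
open scoped Classical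

namespace CoronaAux

lemma card_le_cliqueNum {α : Type*} [Fintype α] {G : SimpleGraph α} {t : Finset α}
    (h : G.IsClique ↑t) : t.card ≤ cliqueNum G :=
  Finset.le_sup (by simp [h])

/-- position of `a` among the elements of `Fin k` satisfying `P` that are `< a`. -/
noncomputable def sideIdx {k : ℕ} (P : Fin k → Prop) (a : Fin k) : ℕ :=
  (Finset.univ.filter (fun a' => P a' ∧ a' < a)).card

lemma sideIdx_lt {k : ℕ} (P : Fin k → Prop) {a a' : Fin k} (ha : P a) (h : a < a') :
    sideIdx P a < sideIdx P a' := by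
  apply Finset.card_lt_card
  constructor
  · intro x hx
    simp only [Finset.mem_filter, Finset.mem_univ, true_and] at hx ⊢
    exact ⟨hx.1, hx.2.trans h⟩
  · intro hsub
    have := hsub (by simp only [Finset.mem_filter, Finset.mem_univ, true_and]; exact ⟨ha, h⟩)
    simp only [Finset.mem_filter, Finset.mem_univ, true_and] at this
    exact lt_irrefl a this.2

lemma sideIdx_ne {k : ℕ} (P : Fin k → Prop) {a a' : Fin k} (ha : P a) (ha' : P a')
    (h : a ≠ a') : sideIdx P a ≠ sideIdx P a' := by
  rcases lt_or_gt_of_ne h with h' | h'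
  · exact (sideIdx_lt P ha h').ne
  · exact (sideIdx_lt P ha' h').ne'

lemma sideIdx_succ {k : ℕ} (P : Fin k → Prop) {a : Fin k} (ha : P a) :
    (Finset.univ.filter (fun a' => P a' ∧ a' ≤ a)).card = sideIdx P a + 1 := by
  have hins : Finset.univ.filter (fun a' => P a' ∧ a' ≤ a)
      = insert a (Finset.univ.filter (fun a' => P a' ∧ a' < a)) := by
    ext x
    simp only [Finset.mem_filter, Finset.mem_univ, true_and, Finset.mem_insert,
      le_iff_lt_or_eq]
    constructor
    · rintro ⟨hP, hlt | rfl⟩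
      · exact Or.inr ⟨hP, hlt⟩
      · exact Or.inl rfl
    · rintro (rfl | ⟨hP, hlt⟩)
      · exact ⟨ha, Or.inr rfl⟩
      · exact ⟨hP, Or.inl hlt⟩
  rw [hins, Finset.card_insert_of_notMem (by simp)]
  rfl

/-- skip the color `c`: color `i` becomes `i` if `i < c`, else `i+1`. -/
def skip (c i : ℕ) : ℕ := if i < c then i else i + 1

lemma skip_ne (c i : ℕ) : skip c i ≠ c := by unfold skip; split <;> omega

lemma skip_lt_skip {c i j : ℕ} (h : i < j) : skip c i < skip c j := by
  unfold skip; split <;> split <;> omega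

lemma skip_ne_skip {c i j : ℕ} (h : i ≠ j) : skip c i ≠ skip c j := by
  rcases lt_or_gt_of_ne h with h' | h'
  · exact (skip_lt_skip h').ne
  · exact (skip_lt_skip h').ne'

lemma skip_le (c i : ℕ) : skip c i ≤ i + 1 := by unfold skip; split <;> omega

/-- A clique in the induced subgraph of a corona, consisting of vertices of one
copy (indexed by a finset `T` mapped through `ι` into `W`), possibly together
with the root vertex `v`. -/
lemma clique_aux {V W : Type*} [Fintype V] [Fintype W] {G : SimpleGraph V}
    {H : SimpleGraph W} {s : Set (V ⊕ V × W)} {k : ℕ} (ι : Fin k → W)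
    (hι : ∀ x y : Fin k, x ≠ y → H.Adj (ι x) (ι y)) (v : V) (T : Finset (Fin k))
    (hT : ∀ a ∈ T, Sum.inr (v, ι a) ∈ s) :
    T.card ≤ cliqueNum ((corona G H).induce s) ∧
      (Sum.inl v ∈ s → T.card + 1 ≤ cliqueNum ((corona G H).induce s)) := by
  have hinj : Function.Injective ι := by
    intro x y hxy
    by_contra hne
    exact H.irrefl (hxy ▸ hι x y hne)
  let f : {a // a ∈ T} → ↥s := fun a => ⟨Sum.inr (v, ι a.1), hT a.1 a.2⟩
  have hfinj : Function.Injective f := by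
    intro x y hxy
    simp only [f, Subtype.mk_eq_mk, Sum.inr.injEq, Prod.mk.injEq, true_and] at hxy
    exact Subtype.ext (hinj hxy)
  set K0 : Finset ↥s := T.attach.image f with hK0
  have hK0card : K0.card = T.card := by
    rw [hK0, Finset.card_image_of_injective _ hfinj, Finset.card_attach]
  have hK0mem : ∀ x ∈ K0, ∃ a : {a // a ∈ T}, x = f a := by
    intro x hx
    rw [hK0, Finset.mem_image] at hx
    obtain ⟨a, _, rfl⟩ := hx
    exact ⟨a, rfl⟩
  have hK0clique : ((corona G H).induce s).IsClique ↑K0 := by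
    intro x hx y hy hne
    obtain ⟨a, rfl⟩ := hK0mem x hx
    obtain ⟨b, rfl⟩ := hK0mem y hy
    have hab : a.1 ≠ b.1 := by
      intro h
      exact hne (congrArg f (Subtype.ext h))
    exact (⟨rfl, hι a.1 b.1 hab⟩ : v = v ∧ H.Adj (ι a.1) (ι b.1))
  constructor
  · have := card_le_cliqueNum hK0clique
    rwa [hK0card] at this
  · intro hv
    set K : Finset ↥s := insert ⟨Sum.inl v, hv⟩ K0 with hK
    have hnm : (⟨Sum.inl v, hv⟩ : ↥s) ∉ K0 := by
      intro hmem
      obtain ⟨a, ha⟩ := hK0mem _ hmem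
      simp only [f, Subtype.mk_eq_mk] at ha
      exact Sum.inl_ne_inr ha
    have hKcard : K.card = T.card + 1 := by
      rw [hK, Finset.card_insert_of_notMem hnm, hK0card]
    have hKclique : ((corona G H).induce s).IsClique ↑K := by
      intro x hx y hy hne
      rw [Finset.mem_coe, hK, Finset.mem_insert] at hx hy
      rcases hx with rfl | hx <;> rcases hy with rfl | hy
      · exact absurd rfl hne
      · obtain ⟨a, rfl⟩ := hK0mem y hy
        exact (rfl : v = v)
      · obtain ⟨a, rfl⟩ := hK0mem x hx
        exact (rfl : v = v)
      · exact hK0clique (Finset.mem_coe.mpr hx) (Finset.mem_coe.mpr hy) hne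
    have := card_le_cliqueNum hKclique
    rwa [hKcard] at this

/-- Index of a leaf vertex within its side of the copy. -/
noncomputable def inrIdx {V : Type*} {p q : ℕ} (s : Set (V ⊕ V × (Fin p ⊕ Fin q)))
    (v : V) : Fin p ⊕ Fin q → ℕ
  | Sum.inl a => sideIdx (fun a' => Sum.inr (v, (Sum.inl a' : Fin p ⊕ Fin q)) ∈ s) a
  | Sum.inr b => sideIdx (fun b' => Sum.inr (v, (Sum.inr b' : Fin p ⊕ Fin q)) ∈ s) b

lemma inrIdx_ne {V : Type*} {p q : ℕ} {s : Set (V ⊕ V × (Fin p ⊕ Fin q))} {v : V}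
    {w w' : Fin p ⊕ Fin q} (hw : Sum.inr (v, w) ∈ s) (hw' : Sum.inr (v, w') ∈ s)
    (h : (disjUnion (⊤ : SimpleGraph (Fin p)) (⊤ : SimpleGraph (Fin q))).Adj w w') :
    inrIdx s v w ≠ inrIdx s v w' := by
  cases w with
  | inl a =>
    cases w' with
    | inl a' => exact sideIdx_ne _ hw hw' (h : a ≠ a')
    | inr b' => exact absurd h (by exact fun hh => hh)
  | inr b =>
    cases w' with
    | inl a' => exact absurd h (by exact fun hh => hh)
    | inr b' => exact sideIdx_ne _ hw hw' (h : b ≠ b')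

lemma inrIdx_bound {V : Type*} [Fintype V] {p q : ℕ} {G : SimpleGraph V}
    {s : Set (V ⊕ V × (Fin p ⊕ Fin q))} {v : V} {w : Fin p ⊕ Fin q}
    (hw : Sum.inr (v, w) ∈ s) :
    inrIdx s v w + 1 ≤ cliqueNum ((corona G (disjUnion (⊤ : SimpleGraph (Fin p))
        (⊤ : SimpleGraph (Fin q)))).induce s) ∧
      (Sum.inl v ∈ s → inrIdx s v w + 2 ≤ cliqueNum ((corona G
        (disjUnion (⊤ : SimpleGraph (Fin p)) (⊤ : SimpleGraph (Fin q)))).induce s)) := by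
  cases w with
  | inl a =>
    have key := clique_aux (G := G)
      (H := disjUnion (⊤ : SimpleGraph (Fin p)) (⊤ : SimpleGraph (Fin q))) (s := s)
      (fun x : Fin p => (Sum.inl x : Fin p ⊕ Fin q))
      (fun x y h => (h : x ≠ y)) v
      (Finset.univ.filter fun a' => Sum.inr (v, (Sum.inl a' : Fin p ⊕ Fin q)) ∈ s ∧ a' ≤ a)
      (fun a' ha' => (Finset.mem_filter.mp ha').2.1)
    rw [sideIdx_succ (fun a' => Sum.inr (v, (Sum.inl a' : Fin p ⊕ Fin q)) ∈ s) hw] at key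
    simp only [inrIdx]
    exact ⟨key.1, fun hv => by have := key.2 hv; omega⟩
  | inr b =>
    have key := clique_aux (G := G)
      (H := disjUnion (⊤ : SimpleGraph (Fin p)) (⊤ : SimpleGraph (Fin q))) (s := s)
      (fun x : Fin q => (Sum.inr x : Fin p ⊕ Fin q))
      (fun x y h => (h : x ≠ y)) v
      (Finset.univ.filter fun b' => Sum.inr (v, (Sum.inr b' : Fin p ⊕ Fin q)) ∈ s ∧ b' ≤ b)
      (fun b' hb' => (Finset.mem_filter.mp hb').2.1)
    rw [sideIdx_succ (fun b' => Sum.inr (v, (Sum.inr b' : Fin p ⊕ Fin q)) ∈ s) hw] at key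
    simp only [inrIdx]
    exact ⟨key.1, fun hv => by have := key.2 hv; omega⟩

lemma cliqueNum_le_chromaticNumber {α : Type*} [Fintype α] (G : SimpleGraph α) :
    (cliqueNum G : ℕ∞) ≤ G.chromaticNumber := by
  rcases eq_or_ne G.chromaticNumber ⊤ with h | h
  · rw [h]; exact le_top
  · lift G.chromaticNumber to ℕ using h with n hn
    rw [Nat.cast_le]
    apply Finset.sup_le
    intro t ht
    have := (Finset.mem_filter.mp ht).2.card_le_chromaticNumber
    rw [← hn, Nat.cast_le] at this
    exact this

/-- The explicit coloring of the induced subgraph of the corona. -/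
noncomputable def coronaColor {V : Type*} {p q : ℕ} (s : Set (V ⊕ V × (Fin p ⊕ Fin q)))
    (C0 : {v : V // Sum.inl v ∈ s} → ℕ) : ↥s → ℕ := fun x =>
  match x with
  | ⟨Sum.inl v, hv⟩ => C0 ⟨v, hv⟩
  | ⟨Sum.inr (v, w), _⟩ =>
      if h : Sum.inl v ∈ s then skip (C0 ⟨v, h⟩) (inrIdx s v w) else inrIdx s v w

lemma coronaColor_inl {V : Type*} {p q : ℕ} {s : Set (V ⊕ V × (Fin p ⊕ Fin q))}
    (C0 : {v : V // Sum.inl v ∈ s} → ℕ) (v : V) (hv : Sum.inl v ∈ s) :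
    coronaColor s C0 ⟨Sum.inl v, hv⟩ = C0 ⟨v, hv⟩ := rfl

lemma coronaColor_inr {V : Type*} {p q : ℕ} {s : Set (V ⊕ V × (Fin p ⊕ Fin q))}
    (C0 : {v : V // Sum.inl v ∈ s} → ℕ) (v : V) (w : Fin p ⊕ Fin q)
    (hw : Sum.inr (v, w) ∈ s) :
    coronaColor s C0 ⟨Sum.inr (v, w), hw⟩ =
      if h : Sum.inl v ∈ s then skip (C0 ⟨v, h⟩) (inrIdx s v w) else inrIdx s v w := rfl

end CoronaAux

open CoronaAux in
/-- if `G` is perfect then so is `G ∘ (K_p ∪ K_q)`. -/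
theorem corona_two_cliques_perfect {V : Type*} [Fintype V] (G : SimpleGraph V)
    (hn : 1 ≤ Fintype.card V) (p q : ℕ) (hp : 1 ≤ p) (hq : 1 ≤ q)
    (hG : IsPerfect G) :
    IsPerfect (corona G
      (disjUnion (⊤ : SimpleGraph (Fin p)) (⊤ : SimpleGraph (Fin q)))) := by
  intro s
  set Hpq := disjUnion (⊤ : SimpleGraph (Fin p)) (⊤ : SimpleGraph (Fin q)) with hHpq
  set GI := (corona G Hpq).induce s with hGIdef
  set N := cliqueNum GI with hNdef
  -- lower bound : N ≤ χ
  have hlow : (N : ℕ∞) ≤ GI.chromaticNumber := by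
    rw [hNdef]
    exact CoronaAux.cliqueNum_le_chromaticNumber GI
  -- the base coloring of the `G`-part
  set A : Set V := {v | Sum.inl v ∈ s} with hAdef
  set m := cliqueNum (G.induce A) with hmdef
  have hcol : (G.induce A).Colorable m := by
    have h1 := (G.induce A).colorable_chromaticNumber_of_fintype
    rw [hG A] at h1
    simpa using h1
  obtain ⟨C0, hC0⟩ := (SimpleGraph.colorable_iff_exists_bdd_nat_coloring m).mp hcol
  have hmN : m ≤ N := by
    rw [hmdef, cliqueNum]
    apply Finset.sup_le
    intro t ht
    have htc : (G.induce A).IsClique ↑t := by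
      simp only [Finset.mem_filter] at ht
      exact ht.2
    let f : ↥A → ↥s := fun v => ⟨Sum.inl v.1, v.2⟩
    have hfinj : Function.Injective f := by
      intro x y h
      simp only [f, Subtype.mk_eq_mk, Sum.inl.injEq] at h
      exact Subtype.ext h
    have himg : GI.IsClique ↑(t.image f) := by
      intro x hx y hy hne
      simp only [Finset.coe_image, Set.mem_image, Finset.mem_coe] at hx hy
      obtain ⟨u, hu, rfl⟩ := hx
      obtain ⟨w, hw, rfl⟩ := hy
      have huw : u ≠ w := fun h => hne (by rw [h])
      exact (htc hu hw huw : G.Adj u.1 w.1)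
    have hcard := CoronaAux.card_le_cliqueNum himg
    rwa [Finset.card_image_of_injective _ hfinj] at hcard
  -- upper bound : colorable with N colors
  have hup : GI.Colorable N := by
    rw [SimpleGraph.colorable_iff_exists_bdd_nat_coloring]
    set c : ↥s → ℕ := CoronaAux.coronaColor s (fun v => C0 ⟨v.1, v.2⟩) with hc
    have hvalid : ∀ x y : ↥s, GI.Adj x y → c x ≠ c y := by
      rintro ⟨(u | ⟨v, w⟩), hx⟩ ⟨(u' | ⟨v', w'⟩), hy⟩ hadj
      · -- both in G
        have hGadj : G.Adj u u' := hadj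
        rw [hc, CoronaAux.coronaColor_inl, CoronaAux.coronaColor_inl]
        exact C0.valid (hGadj : (G.induce A).Adj ⟨u, hx⟩ ⟨u', hy⟩)
      · -- root vs leaf
        have huv : u = v' := hadj
        subst huv
        rw [hc, CoronaAux.coronaColor_inl, CoronaAux.coronaColor_inr, dif_pos hx]
        exact (CoronaAux.skip_ne _ _).symm
      · -- leaf vs root
        have huv : u' = v := hadj
        subst huv
        rw [hc, CoronaAux.coronaColor_inl, CoronaAux.coronaColor_inr, dif_pos hy]
        exact CoronaAux.skip_ne _ _
      · -- both leaves
        have hvv : v = v' ∧ Hpq.Adj w w' := hadj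
        obtain ⟨rfl, hww⟩ := hvv
        have hne := CoronaAux.inrIdx_ne hx hy hww
        rw [hc, CoronaAux.coronaColor_inr, CoronaAux.coronaColor_inr]
        by_cases h : Sum.inl v ∈ s
        · rw [dif_pos h, dif_pos h]
          exact CoronaAux.skip_ne_skip hne
        · rw [dif_neg h, dif_neg h]
          exact hne
    have hbound : ∀ x : ↥s, c x < N := by
      rintro ⟨(u | ⟨v, w⟩), hx⟩
      · rw [hc, CoronaAux.coronaColor_inl]
        exact lt_of_lt_of_le (hC0 ⟨u, hx⟩) hmN
      · have hb := CoronaAux.inrIdx_bound (G := G) (hw := hx)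
        rw [← hHpq, ← hGIdef, ← hNdef] at hb
        rw [hc, CoronaAux.coronaColor_inr]
        by_cases h : Sum.inl v ∈ s
        · rw [dif_pos h]
          have h2 := hb.2 h
          exact lt_of_le_of_lt (CoronaAux.skip_le _ _) (by omega)
        · rw [dif_neg h]
          have h1 := hb.1
          omega
    exact ⟨SimpleGraph.Coloring.mk c (fun {x y} h => hvalid x y h), hbound⟩
  exact le_antisymm (hup.chromaticNumber_le) hlow
end

section
/- Let a > 1 be a real number, n ≥ 1, and let P = 1 + s_1 x + ... + s_{n−1} x^{n−1} + s_n x^n + s_{n−1} x^{n+1} + ... + s_1 x^{2n−1} + x^{2n} be a symmetric polynomial of degree 2n with nonnegative coefficients that is unimodal with a unique mode (necessarily equal to n). Then Q = (1 + a x + x^2) · P is symmetric and unimodal with a unique mode, equal to n + 1. -/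
open Polynomial Finset
open scoped Classical

/-- Auxiliary: the coefficient function of `P` extended to integer indices by zero. -/
noncomputable def auxR (P : Polynomial ℝ) : ℤ → ℝ :=
  fun k => if 0 ≤ k then P.coeff k.toNat else 0

/-- if `a > 1`, `P` is symmetric of degree `2n` with nonnegative
coefficients, constant term `1`, unimodal with a unique mode, then
`Q = (1 + a x + x²) P` is symmetric and unimodal with a unique mode, equal to `n+1`. -/
theorem mul_quadratic_unique_mode (a : ℝ) (ha : 1 < a) (n : ℕ) (hn : 1 ≤ n)
    (P : Polynomial ℝ) (hPd : P.natDegree = 2 * n) (hPc : ∀ i, 0 ≤ P.coeff i)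
    (hP0 : P.coeff 0 = 1) (hPs : CoeffSymmetric P) (hPu : CoeffUnimodal P)
    (hPm : HasUniqueMode P) :
    CoeffSymmetric ((1 + Polynomial.C a * Polynomial.X + Polynomial.X ^ 2) * P) ∧
      IsMode ((1 + Polynomial.C a * Polynomial.X + Polynomial.X ^ 2) * P) (n + 1) ∧
      IsUniqueMode ((1 + Polynomial.C a * Polynomial.X + Polynomial.X ^ 2) * P) (n + 1) := by
    classical
  set Q := (1 + Polynomial.C a * Polynomial.X + Polynomial.X ^ 2) * P with hQdef
  -- the unique mode of P is n
  obtain ⟨m, hm1, hm2⟩ := hPm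
  have hm1' : m ≤ 2 * n := hPd ▸ hm1
  have hmn : m = n := by
    by_contra h
    have h2 : 2 * n - m ≠ m := by omega
    have h3 := hm2 (2 * n - m) (by omega) h2
    have hs := hPs m hm1
    rw [hPd] at hs
    linarith
  rw [hmn] at hm2 hm1'
  have hmax : ∀ j ≤ 2 * n, j ≠ n → P.coeff j < P.coeff n := by
    intro j hj hne
    exact hm2 j (by omega) hne
  -- the unimodality mode of P is n
  obtain ⟨k, hk1, hk2, hk3⟩ := hPu
  have hkn : k = n := by
    rcases lt_trichotomy k n with h | h | h
    · exfalso
      have h3 := hk3 (n - 1) (by omega) (by omega)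
      have he : n - 1 + 1 = n := by omega
      rw [he] at h3
      have h4 := hmax (n - 1) (by omega) (by omega)
      linarith
    · exact h
    · exfalso
      have h2 := hk2 n h
      have h4 := hmax (n + 1) (by omega) (by omega)
      linarith
  rw [hkn] at hk2 hk3
  have hup : ∀ i, i < n → P.coeff i ≤ P.coeff (i + 1) := hk2
  have hdn : ∀ i, n ≤ i → i < 2 * n → P.coeff (i + 1) ≤ P.coeff i := by
    intro i h1 h2
    exact hk3 i h1 (by omega)
  have hzero : ∀ i, 2 * n < i → P.coeff i = 0 := by
    intro i hi
    exact Polynomial.coeff_eq_zero_of_natDegree_lt (by omega)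
  have hpos : (0 : ℝ) < P.coeff n := by
    have := hmax 0 (by omega) (by omega)
    rw [hP0] at this
    linarith
  -- facts about the extended coefficient function
  have rnat : ∀ i : ℕ, auxR P (i : ℤ) = P.coeff i := by
    intro i
    simp [auxR]
  have rnn : ∀ k : ℤ, 0 ≤ auxR P k := by
    intro k
    simp only [auxR]
    split
    · exact hPc _
    · exact le_refl 0
  have rsym : ∀ k : ℤ, auxR P k = auxR P (2 * n - k) := by
    intro k
    simp only [auxR]
    by_cases h0 : (0 : ℤ) ≤ k
    · by_cases h1 : k ≤ 2 * n
      · rw [if_pos h0, if_pos (by omega)]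
        have he : ((2 * (n : ℤ)) - k).toNat = 2 * n - k.toNat := by omega
        rw [he]
        have := hPs k.toNat (by omega)
        rw [hPd] at this
        exact this
      · rw [if_pos h0, if_neg (by omega : ¬ (0 : ℤ) ≤ 2 * n - k)]
        exact hzero k.toNat (by omega)
    · rw [if_neg h0, if_pos (by omega)]
      exact (hzero ((2 * (n : ℤ)) - k).toNat (by omega)).symm
  have rup : ∀ k : ℤ, k < n → auxR P k ≤ auxR P (k + 1) := by
    intro k hk
    simp only [auxR]
    by_cases h0 : (0 : ℤ) ≤ k
    · rw [if_pos h0, if_pos (by omega)]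
      have he : (k + 1).toNat = k.toNat + 1 := by omega
      rw [he]
      exact hup k.toNat (by omega)
    · rw [if_neg h0]
      split
      · exact hPc _
      · exact le_refl 0
  have rdn : ∀ k : ℤ, (n : ℤ) ≤ k → auxR P (k + 1) ≤ auxR P k := by
    intro k hk
    have h0 : (0 : ℤ) ≤ k := by omega
    simp only [auxR, if_pos h0, if_pos (by omega : (0 : ℤ) ≤ k + 1)]
    by_cases h1 : k < 2 * n
    · have he : (k + 1).toNat = k.toNat + 1 := by omega
      rw [he]
      exact hdn k.toNat (by omega) (by omega)
    · have hz : P.coeff (k + 1).toNat = 0 := hzero _ (by omega)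
      rw [hz]
      exact hPc _
  have rmax : ∀ k : ℤ, k ≠ (n : ℤ) → auxR P k < auxR P n := by
    intro k hk
    have hrn : auxR P (n : ℤ) = P.coeff n := rnat n
    rw [hrn]
    simp only [auxR]
    split
    · next h0 =>
      by_cases h1 : k ≤ 2 * n
      · exact hmax k.toNat (by omega) (by omega)
      · rw [hzero k.toNat (by omega)]
        exact hpos
    · exact hpos
  -- coefficient formula for Q
  have hexp : Q = P * Polynomial.X ^ 0 + Polynomial.C a * (P * Polynomial.X ^ 1)
      + P * Polynomial.X ^ 2 := by
    rw [hQdef]; ring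
  have hq : ∀ i : ℕ, Q.coeff i = auxR P (i : ℤ) + a * auxR P ((i : ℤ) - 1)
      + auxR P ((i : ℤ) - 2) := by
    intro i
    rw [hexp]
    simp only [Polynomial.coeff_add, Polynomial.coeff_C_mul, Polynomial.coeff_mul_X_pow']
    match i with
    | 0 => norm_num [auxR, hP0]
    | 1 => norm_num [auxR]
    | (j + 2) =>
      rw [if_pos (by omega : 0 ≤ j + 2), if_pos (by omega : 1 ≤ j + 2),
        if_pos (by omega : 2 ≤ j + 2)]
      have e1 : ((j + 2 : ℕ) : ℤ) - 1 = ((j + 1 : ℕ) : ℤ) := by push_cast; ring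
      have e2 : ((j + 2 : ℕ) : ℤ) - 2 = ((j : ℕ) : ℤ) := by push_cast; ring
      rw [e1, e2, rnat, rnat, rnat]
      norm_num
  -- degree of Q
  have hP0' : P ≠ 0 := fun h => by simp [h] at hP0
  have hTdeg : (1 + Polynomial.C a * Polynomial.X + Polynomial.X ^ 2 : Polynomial ℝ).natDegree
      = 2 := by
    compute_degree!
  have hT0 : (1 + Polynomial.C a * Polynomial.X + Polynomial.X ^ 2 : Polynomial ℝ) ≠ 0 := by
    intro h
    rw [h] at hTdeg
    simp at hTdeg
  have hQdeg : Q.natDegree = 2 * n + 2 := by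
    rw [hQdef, Polynomial.natDegree_mul hT0 hP0', hTdeg, hPd]
    ring
  -- step inequalities for Q
  have qup : ∀ i : ℕ, i < n → Q.coeff i ≤ Q.coeff (i + 1) := by
    intro i hi
    rw [hq i, hq (i + 1)]
    push_cast
    have e1 : (i : ℤ) + 1 - 1 = (i : ℤ) := by ring
    have e2 : (i : ℤ) + 1 - 2 = (i : ℤ) - 1 := by ring
    rw [e1, e2]
    have h1 := rup (i : ℤ) (by omega)
    have h2 := rup ((i : ℤ) - 1) (by omega)
    have h3 := rup ((i : ℤ) - 2) (by omega)
    rw [show (i : ℤ) - 1 + 1 = (i : ℤ) by ring] at h2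
    rw [show (i : ℤ) - 2 + 1 = (i : ℤ) - 1 by ring] at h3
    have h4 := mul_le_mul_of_nonneg_left h2 (by linarith : (0 : ℝ) ≤ a)
    linarith
  have qmid : Q.coeff n < Q.coeff (n + 1) := by
    rw [hq n, hq (n + 1)]
    push_cast
    have e1 : (n : ℤ) + 1 - 1 = (n : ℤ) := by ring
    have e2 : (n : ℤ) + 1 - 2 = (n : ℤ) - 1 := by ring
    rw [e1, e2]
    have hs1 : auxR P ((n : ℤ) + 1) = auxR P ((n : ℤ) - 1) := by
      rw [rsym ((n : ℤ) + 1)]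
      congr 1
      ring
    rw [hs1]
    have h2 := rup ((n : ℤ) - 2) (by omega)
    rw [show (n : ℤ) - 2 + 1 = (n : ℤ) - 1 by ring] at h2
    have h3 := rmax ((n : ℤ) - 1) (by omega)
    have h4 := mul_lt_mul_of_pos_left h3 (by linarith : (0 : ℝ) < a - 1)
    nlinarith
  have qmid2 : Q.coeff (n + 2) < Q.coeff (n + 1) := by
    rw [hq (n + 1), hq (n + 2)]
    push_cast
    have e1 : (n : ℤ) + 1 - 1 = (n : ℤ) := by ring
    have e2 : (n : ℤ) + 1 - 2 = (n : ℤ) - 1 := by ring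
    have e3 : (n : ℤ) + 2 - 1 = (n : ℤ) + 1 := by ring
    have e4 : (n : ℤ) + 2 - 2 = (n : ℤ) := by ring
    rw [e1, e2, e3, e4]
    have hs1 : auxR P ((n : ℤ) + 1) = auxR P ((n : ℤ) - 1) := by
      rw [rsym ((n : ℤ) + 1)]; congr 1; ring
    have hs2 : auxR P ((n : ℤ) + 2) = auxR P ((n : ℤ) - 2) := by
      rw [rsym ((n : ℤ) + 2)]; congr 1; ring
    rw [hs1, hs2]
    have h2 := rup ((n : ℤ) - 2) (by omega)
    rw [show (n : ℤ) - 2 + 1 = (n : ℤ) - 1 by ring] at h2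
    have h3 := rmax ((n : ℤ) - 1) (by omega)
    have h4 := mul_lt_mul_of_pos_left h3 (by linarith : (0 : ℝ) < a - 1)
    nlinarith
  have qdn : ∀ i : ℕ, n + 2 ≤ i → Q.coeff (i + 1) ≤ Q.coeff i := by
    intro i hi
    rw [hq i, hq (i + 1)]
    push_cast
    have e1 : (i : ℤ) + 1 - 1 = (i : ℤ) := by ring
    have e2 : (i : ℤ) + 1 - 2 = (i : ℤ) - 1 := by ring
    rw [e1, e2]
    have h1 := rdn (i : ℤ) (by omega)
    have h2 := rdn ((i : ℤ) - 1) (by omega)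
    have h3 := rdn ((i : ℤ) - 2) (by omega)
    rw [show (i : ℤ) - 1 + 1 = (i : ℤ) by ring] at h2
    rw [show (i : ℤ) - 2 + 1 = (i : ℤ) - 1 by ring] at h3
    have h4 := mul_le_mul_of_nonneg_left h2 (by linarith : (0 : ℝ) ≤ a)
    linarith
  -- chains
  have chain1 : ∀ d : ℕ, d ≤ n → Q.coeff (n - d) ≤ Q.coeff n := by
    intro d
    induction d with
    | zero => intro _; simp
    | succ d ih =>
      intro hd
      have h1 : Q.coeff (n - (d + 1)) ≤ Q.coeff (n - (d + 1) + 1) := qup _ (by omega)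
      have h2 : n - (d + 1) + 1 = n - d := by omega
      rw [h2] at h1
      exact h1.trans (ih (by omega))
  have chain2 : ∀ d : ℕ, Q.coeff (n + 2 + d) ≤ Q.coeff (n + 2) := by
    intro d
    induction d with
    | zero => exact le_refl _
    | succ d ih =>
      have h1 : Q.coeff (n + 2 + d + 1) ≤ Q.coeff (n + 2 + d) := qdn _ (by omega)
      have h2 : n + 2 + (d + 1) = n + 2 + d + 1 := by omega
      rw [h2]
      exact h1.trans ih
  refine ⟨?_, ⟨by omega, ?_, ?_⟩, by omega, ?_⟩
  · -- symmetry
    intro i hi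
    rw [hQdeg] at hi ⊢
    rw [hq i, hq (2 * n + 2 - i)]
    have hc : ((2 * n + 2 - i : ℕ) : ℤ) = 2 * (n : ℤ) + 2 - (i : ℤ) := by omega
    rw [hc]
    have e1 : 2 * (n : ℤ) + 2 - (i : ℤ) = 2 * n - ((i : ℤ) - 2) := by ring
    have e2 : 2 * (n : ℤ) + 2 - (i : ℤ) - 1 = 2 * n - ((i : ℤ) - 1) := by ring
    have e3 : 2 * (n : ℤ) + 2 - (i : ℤ) - 2 = 2 * n - (i : ℤ) := by ring
    rw [e3, e2, e1, ← rsym, ← rsym, ← rsym]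
    ring
  · -- increasing part
    intro i hi
    by_cases h : i < n
    · exact qup i h
    · have : i = n := by omega
      subst this
      exact qmid.le
  · -- decreasing part
    intro i hi1 hi2
    by_cases h : i = n + 1
    · subst h
      exact qmid2.le
    · exact qdn i (by omega)
  · -- unique mode
    intro j hj hne
    rw [hQdeg] at hj
    by_cases h : j ≤ n
    · have h1 : Q.coeff j ≤ Q.coeff n := by
        have he : j = n - (n - j) := by omega
        rw [he]
        exact chain1 (n - j) (by omega)
      linarith [qmid]
    · have hj2 : n + 2 ≤ j := by omega
      have h1 : Q.coeff j ≤ Q.coeff (n + 2) := by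
        have he : j = n + 2 + (j - (n + 2)) := by omega
        rw [he]
        exact chain2 (j - (n + 2))
      linarith [qmid2]
end

section
/- If P and Q are real polynomials with nonnegative coefficients that are both symmetric and unimodal, then their product P·Q is symmetric and unimodal. -/
open Polynomial Finset
open scoped Classical

noncomputable def geomS (s : ℕ) : Polynomial ℝ := ∑ j ∈ Finset.range (s+1), X ^ j

lemma geomS_coeff (s t : ℕ) : (geomS s).coeff t = if t ≤ s then 1 else 0 := by
  unfold geomS
  rw [finset_sum_coeff]
  simp only [coeff_X_pow]
  rw [Finset.sum_ite_eq (Finset.range (s+1)) t (fun _ => (1:ℝ))]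
  simp [Nat.lt_succ_iff]

def gcnt (s r t : ℕ) : ℕ := if t ≤ s + r then min s t + 1 - (t - r) else 0

lemma geomS_mul_coeff (s r t : ℕ) :
    (geomS s * geomS r).coeff t = (gcnt s r t : ℝ) := by
  induction s with
  | zero =>
    have h0 : geomS 0 = 1 := by simp [geomS]
    rw [h0, one_mul, geomS_coeff]
    unfold gcnt
    split_ifs with h1 h2 h2
    · have : 0 ⊓ t + 1 - (t - r) = 1 := by omega
      rw [this]; norm_num
    · omega
    · omega
    · norm_num
  | succ s ih =>
    have hstep : geomS (s+1) = geomS s + X ^ (s+1) := by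
      unfold geomS; rw [Finset.sum_range_succ]
    rw [hstep, add_mul, coeff_add, ih, mul_comm (X ^ (s+1)) (geomS r),
      coeff_mul_X_pow']
    have hg : gcnt (s+1) r t =
        gcnt s r t + (if s + 1 ≤ t ∧ t - (s+1) ≤ r then 1 else 0) := by
      unfold gcnt; split_ifs <;> omega
    rw [hg]
    push_cast
    split_ifs with h1 h2 <;> simp_all [geomS_coeff]

/-- Nonnegative, supported on `[0,N]`, symmetric about `N/2`, nondecreasing on first half. -/
def SUaux (N : ℕ) (R : Polynomial ℝ) : Prop :=
  (∀ i, 0 ≤ R.coeff i) ∧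
  (∀ i, N < i → R.coeff i = 0) ∧
  (∀ i, i ≤ N → R.coeff i = R.coeff (N - i)) ∧
  (∀ i, 2*i + 1 ≤ N → R.coeff i ≤ R.coeff (i+1))

lemma SUaux_zero (N : ℕ) : SUaux N 0 := by
  refine ⟨?_, ?_, ?_, ?_⟩ <;> simp

lemma SUaux_add {N : ℕ} {R S : Polynomial ℝ} (hR : SUaux N R) (hS : SUaux N S) :
    SUaux N (R + S) := by
  obtain ⟨h1, h2, h3, h4⟩ := hR
  obtain ⟨g1, g2, g3, g4⟩ := hS
  refine ⟨fun i => ?_, fun i hi => ?_, fun i hi => ?_, fun i hi => ?_⟩ <;>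
    simp only [coeff_add]
  · exact add_nonneg (h1 i) (g1 i)
  · rw [h2 i hi, g2 i hi, add_zero]
  · rw [h3 i hi, g3 i hi]
  · exact add_le_add (h4 i hi) (g4 i hi)

lemma SUaux_smul {N : ℕ} {c : ℝ} (hc : 0 ≤ c) {R : Polynomial ℝ} (hR : SUaux N R) :
    SUaux N (C c * R) := by
  obtain ⟨h1, h2, h3, h4⟩ := hR
  refine ⟨fun i => ?_, fun i hi => ?_, fun i hi => ?_, fun i hi => ?_⟩ <;>
    simp only [coeff_C_mul]
  · exact mul_nonneg hc (h1 i)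
  · rw [h2 i hi, mul_zero]
  · rw [h3 i hi]
  · exact mul_le_mul_of_nonneg_left (h4 i hi) hc

lemma SUaux_shift {N k : ℕ} {R : Polynomial ℝ} (hR : SUaux N R) :
    SUaux (N + 2*k) (R * X ^ k) := by
  obtain ⟨h1, h2, h3, h4⟩ := hR
  refine ⟨fun i => ?_, fun i hi => ?_, fun i hi => ?_, fun i hi => ?_⟩ <;>
    simp only [coeff_mul_X_pow']
  · split_ifs
    · exact h1 _
    · exact le_refl 0
  · split_ifs with h
    · exact h2 _ (by omega)
    · rfl
  · split_ifs with ha hb hb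
    · by_cases hc : i ≤ N + k
      · rw [h3 (i - k) (by omega)]
        congr 1
        omega
      · rw [h2 (i - k) (by omega), h2 (N + 2*k - i - k) (by omega)]
    · exact h2 (i - k) (by omega)
    · rw [h2 (N + 2*k - i - k) (by omega)]
    · rfl
  · split_ifs with ha hb hb
    · have : i + 1 - k = (i - k) + 1 := by omega
      rw [this]
      exact h4 (i - k) (by omega)
    · omega
    · exact h1 _
    · exact le_refl 0

lemma SUaux_geom_mul (s r : ℕ) : SUaux (s + r) (geomS s * geomS r) := by
  refine ⟨fun i => ?_, fun i hi => ?_, fun i hi => ?_, fun i hi => ?_⟩ <;>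
    rw [geomS_mul_coeff] <;> try rw [geomS_mul_coeff]
  · positivity
  · have : gcnt s r i = 0 := by unfold gcnt; split_ifs <;> omega
    rw [this]; norm_num
  · congr 1
    unfold gcnt; split_ifs <;> omega
  · have : gcnt s r i ≤ gcnt s r (i+1) := by unfold gcnt; split_ifs <;> omega
    exact_mod_cast this

lemma SUaux_sum {N : ℕ} {α : Type*} (F : Finset α) (f : α → Polynomial ℝ)
    (h : ∀ a ∈ F, SUaux N (f a)) : SUaux N (∑ a ∈ F, f a) := by
  classical
  induction F using Finset.induction_on with
  | empty => simpa using SUaux_zero N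
  | insert x F hx ih =>
    rw [Finset.sum_insert hx]
    exact SUaux_add (h _ (Finset.mem_insert_self _ _))
      (ih fun a ha => h a (Finset.mem_insert_of_mem ha))


/-- the difference sequence -/
noncomputable def dseq (P : Polynomial ℝ) (i : ℕ) : ℝ :=
  P.coeff i - if i = 0 then 0 else P.coeff (i - 1)

lemma dseq_sum (P : Polynomial ℝ) (k : ℕ) :
    ∑ i ∈ Finset.range (k+1), dseq P i = P.coeff k := by
  induction k with
  | zero => simp [dseq]
  | succ k ih => rw [Finset.sum_range_succ, ih]; simp [dseq]

/-- antitone on the right of the mode -/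
lemma antitone_right {P : Polynomial ℝ} {k : ℕ}
    (hdec : ∀ i, k ≤ i → i < P.natDegree → P.coeff (i + 1) ≤ P.coeff i) :
    ∀ a b, k ≤ a → a ≤ b → b ≤ P.natDegree → P.coeff b ≤ P.coeff a := by
  intro a b ha
  induction b with
  | zero =>
    intro hab hb
    have : a = 0 := by omega
    rw [this]
  | succ b ih =>
    intro hab hb
    rcases Nat.lt_or_ge a (b+1) with h | h
    · exact le_trans (hdec b (by omega) (by omega)) (ih (by omega) (by omega))
    · have : a = b + 1 := by omega
      rw [this]

/-- symmetric + unimodal implies nondecreasing on the first half -/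
lemma mono_first_half {P : Polynomial ℝ} (hs : CoeffSymmetric P) (hu : CoeffUnimodal P) :
    ∀ i, 2*i + 1 ≤ P.natDegree → P.coeff i ≤ P.coeff (i+1) := by
  obtain ⟨k, hk, hinc, hdec⟩ := hu
  intro i hi
  rcases Nat.lt_or_ge i k with h | h
  · exact hinc i h
  · have h1 : P.coeff i = P.coeff (P.natDegree - i) := hs i (by omega)
    rw [h1]
    exact antitone_right hdec (i+1) (P.natDegree - i) (by omega) (by omega) (by omega)

lemma decomp (P : Polynomial ℝ) (hs : CoeffSymmetric P)
    (hm : ∀ i, 2*i + 1 ≤ P.natDegree → P.coeff i ≤ P.coeff (i+1)) :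
    P = ∑ i ∈ Finset.range (P.natDegree / 2 + 1),
      C (dseq P i) * (geomS (P.natDegree - 2*i) * X ^ i) := by
  have hn : P.natDegree = P.natDegree := rfl
  ext t
  rw [finset_sum_coeff]
  simp only [coeff_C_mul, coeff_mul_X_pow', geomS_coeff]
  rcases Nat.lt_or_ge P.natDegree t with ht | ht
  · rw [Polynomial.coeff_eq_zero_of_natDegree_lt ht]
    refine (Finset.sum_eq_zero fun i hi => ?_).symm
    rw [Finset.mem_range] at hi
    split_ifs with h1 h2
    · exact absurd (by omega : ¬ t - i ≤ P.natDegree - 2*i) (by exact fun hc => hc h2)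
    · ring
    · ring
  · have step1 : ∀ i ∈ Finset.range (P.natDegree/2 + 1),
        dseq P i * (if i ≤ t then (if t - i ≤ P.natDegree - 2*i then (1:ℝ) else 0) else 0)
          = if i ≤ min t (P.natDegree - t) then dseq P i else 0 := by
      intro i hi
      rw [Finset.mem_range] at hi
      split_ifs with h1 h2 h3 h3
      · ring
      · exact absurd (by omega : i ≤ min t (P.natDegree - t)) h3
      · exact absurd (show t - i ≤ P.natDegree - 2*i by omega) h2
      · ring
      · exact absurd (show i ≤ t by omega) h1
      · ring
    rw [Finset.sum_congr rfl step1]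
    have hsub : Finset.range (min t (P.natDegree - t) + 1) ⊆
        Finset.range (P.natDegree/2 + 1) := Finset.range_subset_range.2 (by omega)
    rw [← Finset.sum_subset hsub
      (fun x _ hx => by rw [Finset.mem_range] at hx; exact if_neg (by omega))]
    have step2 : ∀ x ∈ Finset.range (min t (P.natDegree - t) + 1),
        (if x ≤ min t (P.natDegree - t) then dseq P x else 0) = dseq P x := by
      intro x hx
      rw [Finset.mem_range] at hx
      exact if_pos (by omega)
    rw [Finset.sum_congr rfl step2, dseq_sum]
    rcases le_or_gt t (P.natDegree - t) with h | h
    · rw [min_eq_left h]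
    · rw [min_eq_right (le_of_lt h)]
      rw [hs (P.natDegree - t) (by omega)]
      congr 1
      omega

lemma dseq_nonneg (P : Polynomial ℝ) (hnn : ∀ i, 0 ≤ P.coeff i)
    (hm : ∀ i, 2*i + 1 ≤ P.natDegree → P.coeff i ≤ P.coeff (i+1)) :
    ∀ i, 2*i ≤ P.natDegree → 0 ≤ dseq P i := by
  intro i hi
  unfold dseq
  split_ifs with h
  · simpa using hnn i
  · have h1 := hm (i-1) (by omega)
    have h2 : i - 1 + 1 = i := by omega
    rw [h2] at h1
    linarith

theorem mul_symmetric_unimodal' (P Q : Polynomial ℝ)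
    (hPc : ∀ i, 0 ≤ P.coeff i) (hQc : ∀ i, 0 ≤ Q.coeff i)
    (hPs : CoeffSymmetric P) (hPu : CoeffUnimodal P)
    (hQs : CoeffSymmetric Q) (hQu : CoeffUnimodal Q) :
    CoeffSymmetric (P * Q) ∧ CoeffUnimodal (P * Q) := by
  by_cases h0 : P * Q = 0
  · rw [h0]
    refine ⟨fun i hi => by simp, 0, by simp [IsMode]⟩
  · obtain ⟨hP, hQ⟩ := mul_ne_zero_iff.1 h0
    have hmP := mono_first_half hPs hPu
    have hmQ := mono_first_half hQs hQu
    have hdeg : (P * Q).natDegree = P.natDegree + Q.natDegree := natDegree_mul hP hQ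
    have hsu : SUaux (P.natDegree + Q.natDegree) (P * Q) := by
      have hPQ : P * Q =
          (∑ i ∈ Finset.range (P.natDegree / 2 + 1),
            C (dseq P i) * (geomS (P.natDegree - 2*i) * X ^ i)) *
          (∑ j ∈ Finset.range (Q.natDegree / 2 + 1),
            C (dseq Q j) * (geomS (Q.natDegree - 2*j) * X ^ j)) := by
        rw [← decomp P hPs hmP, ← decomp Q hQs hmQ]
      rw [hPQ, Finset.sum_mul_sum]
      apply SUaux_sum
      intro i hi
      apply SUaux_sum
      intro j hj
      rw [Finset.mem_range] at hi hj
      have heq : (C (dseq P i) * (geomS (P.natDegree - 2*i) * X ^ i)) *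
          (C (dseq Q j) * (geomS (Q.natDegree - 2*j) * X ^ j)) =
          C (dseq P i * dseq Q j) *
            ((geomS (P.natDegree - 2*i) * geomS (Q.natDegree - 2*j)) * X ^ (i + j)) := by
        rw [map_mul]
        ring
      rw [heq]
      have hN : (P.natDegree - 2*i) + (Q.natDegree - 2*j) + 2*(i+j)
          = P.natDegree + Q.natDegree := by omega
      have := SUaux_smul
        (mul_nonneg (dseq_nonneg P hPc hmP i (by omega))
          (dseq_nonneg Q hQc hmQ j (by omega)))
        (SUaux_shift (k := i + j) (SUaux_geom_mul (P.natDegree - 2*i) (Q.natDegree - 2*j)))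
      rwa [hN] at this
    obtain ⟨hnn', hzero, hsym, hmono⟩ := hsu
    constructor
    · intro i hi
      rw [hdeg] at hi ⊢
      exact hsym i hi
    · refine ⟨(P.natDegree + Q.natDegree) / 2, ?_, ?_, ?_⟩
      · rw [hdeg]; exact Nat.div_le_self _ _
      · intro i hlt
        exact hmono i (by omega)
      · intro i hge hlt
        rw [hdeg] at hlt
        set N := P.natDegree + Q.natDegree with hNdef
        calc (P*Q).coeff (i+1) = (P*Q).coeff (N - (i+1)) := hsym (i+1) (by omega)
          _ ≤ (P*Q).coeff (N - (i+1) + 1) := hmono (N - (i+1)) (by omega)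
          _ = (P*Q).coeff (N - i) := by congr 1; omega
          _ = (P*Q).coeff i := by
              rw [← hsym i (by omega)]

/-- the product of two symmetric and unimodal polynomials with
nonnegative coefficients is symmetric and unimodal. -/
theorem mul_symmetric_unimodal (P Q : Polynomial ℝ)
    (hPc : ∀ i, 0 ≤ P.coeff i) (hQc : ∀ i, 0 ≤ Q.coeff i)
    (hPs : CoeffSymmetric P) (hPu : CoeffUnimodal P)
    (hQs : CoeffSymmetric Q) (hQu : CoeffUnimodal Q) :
    CoeffSymmetric (P * Q) ∧ CoeffUnimodal (P * Q) :=
  mul_symmetric_unimodal' P Q hPc hQc hPs hPu hQs hQu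
end
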